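/- arXiv:1202.1122 — 2 statements merged into one kernel-verified Lean document; each statement's English description precedes it below -/
import Mathlib

section
/- Relative Poincaré lemma for quasi-homogeneous ideals: Let I be a finitely generated quasi-homogeneous ideal in the ring of C-analytic function-germs on (C^m,0), i.e., I is generated by function-germs f₁,…,f_k that are quasi-homogeneous in a common coordinate system with common positive integer weights. If ω is a germ of a closed p-form lying in I·Λ^p(C^m) (that is, ω = Σ g_i α_i with g_i ∈ I and α_i p-forms), then there exists a (p−1)-form germ α ∈ I·Λ^{p−1}(C^m) with ω = dα. -/
open Filter Topology

set_option maxHeartbeats 1000000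
set_option synthInstance.maxHeartbeats 400000

noncomputable section

/-- The space `ℂ^m`. -/
abbrev Cm (m : ℕ) := Fin m → ℂ

/-- Model of the ring of `ℂ`-analytic function-germs at `0` on `ℂ^m`:
functions that are analytic at `0`. -/
def AnalyticGermRing (m : ℕ) : Subalgebra ℂ (Cm m → ℂ) where
  carrier := {f | AnalyticAt ℂ f 0}
  mul_mem' := fun hf hg => hf.mul hg
  add_mem' := fun hf hg => hf.add hg
  algebraMap_mem' := fun _ => analyticAt_const

/-- `O m` : the ring of analytic function-germs at `0 ∈ ℂ^m` (model). -/
abbrev O (m : ℕ) := AnalyticGermRing m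

theorem coord_analyticAt (m : ℕ) (i : Fin m) (x : Cm m) :
    AnalyticAt ℂ (fun y : Cm m => y i) x :=
  (ContinuousLinearMap.proj (R := ℂ) (φ := fun _ : Fin m => ℂ) i).analyticAt x

/-- The `i`-th coordinate function as an analytic germ. -/
def coordO (m : ℕ) (i : Fin m) : O m := ⟨fun y => y i, coord_analyticAt m i 0⟩

/-- Partial derivative `∂/∂x_i` on analytic germs. -/
def pd {m : ℕ} (i : Fin m) (f : O m) : O m :=
  ⟨fun x => fderiv ℂ (f : Cm m → ℂ) x (Pi.single i 1), by
    have h1 : AnalyticAt ℂ (fderiv ℂ (f : Cm m → ℂ)) 0 := f.2.fderiv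
    have h2 := (ContinuousLinearMap.apply ℂ ℂ (Pi.single i 1 : Cm m)).analyticAt
      (fderiv ℂ (f : Cm m → ℂ) 0)
    exact h2.comp h1⟩

/-- Germs of analytic differential `p`-forms on `ℂ^m`, given by their
coefficient family: `ω J` is the coefficient of `dx_{J 0} ⊗ ⋯ ⊗ dx_{J (p-1)}`. -/
abbrev Form (m p : ℕ) := (Fin p → Fin m) → O m

/-- A form is alternating: coefficients vanish on non-injective indices and are
antisymmetric under permutations. -/
def IsAlt {m p : ℕ} (ω : Form m p) : Prop :=
  (∀ J : Fin p → Fin m, ¬ Function.Injective J → ω J = 0) ∧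
  ∀ (J : Fin p → Fin m) (σ : Equiv.Perm (Fin p)),
    ω (J ∘ σ) = ((Equiv.Perm.sign σ : ℤ) : ℂ) • ω J

/-- Exterior derivative on coefficient families. -/
def extD {m p : ℕ} (ω : Form m p) : Form m (p + 1) :=
  fun J => ∑ i : Fin (p + 1), ((-1 : ℂ) ^ (i : ℕ)) • pd (J i) (ω (J ∘ i.succAbove))

/-- Exterior derivative from degree `p-1` to degree `p` (zero in degree `0`). -/
def dLow {m : ℕ} : {p : ℕ} → Form m (p - 1) → Form m p
  | 0, _ => 0
  | _ + 1, β => extD β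

/-- `ω ∈ I·Λ^p`: all coefficients lie in the ideal `I`. -/
def memIF {m p : ℕ} (I : Ideal (O m)) (ω : Form m p) : Prop := ∀ J, ω J ∈ I

/-- Equality of forms as germs at `0`. -/
def FormEq {m p : ℕ} (ω₁ ω₂ : Form m p) : Prop :=
  ∀ J, ((ω₁ J : Cm m → ℂ)) =ᶠ[𝓝 (0 : Cm m)] (ω₂ J : Cm m → ℂ)

/-- `ω` has zero algebraic restriction to `I`:
`ω = α + dβ` with `α ∈ I·Λ^p`, `β ∈ I·Λ^{p-1}`. -/
def ZeroAR {m p : ℕ} (I : Ideal (O m)) (ω : Form m p) : Prop :=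
  ∃ (α : Form m p) (β : Form m (p - 1)),
    memIF I α ∧ memIF I β ∧ FormEq ω (α + dLow β)

/-- Interior product with a vector field. -/
def iprod {m : ℕ} (X : Fin m → O m) : {p : ℕ} → Form m p → Form m (p - 1)
  | 0, _ => 0
  | _ + 1, ω => fun J => ∑ k : Fin m, X k * ω (Fin.cons k J)

/-- Lie derivative of a form along a vector field (Cartan's formula). -/
def lieD {m p : ℕ} (X : Fin m → O m) (ω : Form m p) : Form m p :=
  dLow (iprod X ω) + (show Form m p from iprod X (extD ω))

/-- Wedge product of forms (on coefficient families, with the usual normalization). -/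
def wedge {m p q : ℕ} (ω : Form m p) (γ : Form m q) : Form m (p + q) :=
  ((p.factorial * q.factorial : ℂ))⁻¹ •
    (fun K => ∑ σ : Equiv.Perm (Fin (p + q)),
      ((Equiv.Perm.sign σ : ℤ) : ℂ) •
        (ω (fun i => K (σ (Fin.castAdd q i))) * γ (fun j => K (σ (Fin.natAdd p j)))))

/-- Coefficient family of the pullback `Φ^*ω` (as plain functions). -/
def pullFunForm {k m p : ℕ} (Φ : Cm k → Cm m) (ω : Form m p) :
    (Fin p → Fin k) → Cm k → ℂ :=
  fun J x => ∑ K : Fin p → Fin m,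
    (ω K : Cm m → ℂ) (Φ x) *
      ∏ i : Fin p, fderiv ℂ (fun y => Φ y (K i)) x (Pi.single (J i) 1)

/-- The analytic form `ω'` represents the coefficient family `c` (as germs at `0`). -/
def Represents {k p : ℕ} (ω' : Form k p) (c : (Fin p → Fin k) → Cm k → ℂ) : Prop :=
  ∀ J, (ω' J : Cm k → ℂ) =ᶠ[𝓝 (0 : Cm k)] c J

/-- `Φ^*I = I` : `f ∈ I` iff `f ∘ Φ` is (the germ of) an element of `I`. -/
def PreservesIdeal {m : ℕ} (Φ : Cm m → Cm m) (I : Ideal (O m)) : Prop :=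
  ∀ f : O m, f ∈ I ↔
    ∃ g ∈ I, (g : Cm m → ℂ) =ᶠ[𝓝 (0 : Cm m)] fun x => (f : Cm m → ℂ) (Φ x)

/-- A diffeomorphism-germ of `(ℂ^m, 0)` (model). -/
structure LocalDiffeo (m : ℕ) where
  toFun : Cm m → Cm m
  invFun : Cm m → Cm m
  an : AnalyticAt ℂ toFun 0
  map_zero : toFun 0 = 0
  left_inv : ∀ᶠ x in 𝓝 (0 : Cm m), invFun (toFun x) = x
  right_inv : ∀ᶠ x in 𝓝 (0 : Cm m), toFun (invFun x) = x

/-- The algebraic restrictions `[ω₁]_I` and `[ω₂]_I` are diffeomorphic (via a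
diffeomorphism-germ preserving `I`). -/
def ARDiffeomorphic {m p : ℕ} (I : Ideal (O m)) (ω₁ ω₂ : Form m p) : Prop :=
  ∃ Φ : LocalDiffeo m, PreservesIdeal Φ.toFun I ∧
    ∀ ω' : Form m p, Represents ω' (pullFunForm Φ.toFun ω₂) → ZeroAR I (ω' - ω₁)

/-- The Euler vector field `Σ λ_i x_i ∂/∂x_i`. -/
def eulerVF (m : ℕ) (lam : Fin m → ℕ) : Fin m → O m :=
  fun i => ((lam i : ℂ)) • coordO m i

/-- The coordinate `y` on `ℂ²`. -/
def Y : O 2 := coordO 2 0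
/-- The coordinate `z` on `ℂ²`. -/
def Z : O 2 := coordO 2 1

/-- The 1-form `g dy + h dz` on `ℂ²`. -/
def oneF (g h : O 2) : Form 2 1 := fun J => if J 0 = 0 then g else h

/-- The 2-form `f dy ∧ dz` on `ℂ²`. -/
def twoF (f : O 2) : Form 2 2 :=
  fun J => if J 0 = 0 ∧ J 1 = 1 then f else if J 0 = 1 ∧ J 1 = 0 then -f else 0



section RPAux
open MeasureTheory Metric
open scoped ENNReal NNReal

namespace RP

variable {m : ℕ}

/-- The quasi-homogeneous dilation as a continuous linear map. -/
def DmL (lam : Fin m → ℕ) (t : ℝ) : Cm m →L[ℂ] Cm m :=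
  ContinuousLinearMap.pi fun j => ((t : ℂ) ^ lam j) • ContinuousLinearMap.proj j

@[simp] lemma DmL_apply (lam : Fin m → ℕ) (t : ℝ) (x : Cm m) (j : Fin m) :
    DmL lam t x j = (t : ℂ) ^ lam j * x j := rfl

lemma norm_DmL_le (lam : Fin m → ℕ) {t : ℝ} (ht : |t| ≤ 1) (x : Cm m) :
    ‖DmL lam t x‖ ≤ ‖x‖ := by
  rw [pi_norm_le_iff_of_nonneg (norm_nonneg x)]
  intro j
  rw [DmL_apply, norm_mul, norm_pow, Complex.norm_real]
  calc ‖t‖ ^ lam j * ‖x j‖ ≤ 1 * ‖x j‖ := by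
        apply mul_le_mul_of_nonneg_right _ (norm_nonneg _)
        exact pow_le_one₀ (norm_nonneg t) ht
    _ ≤ ‖x‖ := by rw [one_mul]; exact norm_le_pi_norm x j

lemma opNorm_DmL_le (lam : Fin m → ℕ) {t : ℝ} (ht : |t| ≤ 1) :
    ‖DmL lam t‖ ≤ 1 :=
  ContinuousLinearMap.opNorm_le_bound _ zero_le_one
    (fun x => by rw [one_mul]; exact norm_DmL_le lam ht x)

lemma continuous_DmL_x (lam : Fin m → ℕ) (x : Cm m) :
    Continuous fun t : ℝ => DmL lam t x := by
  apply continuous_pi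
  intro j
  simp only [DmL_apply]
  exact (Complex.continuous_ofReal.pow _).mul continuous_const

/-- single-coordinate embedding as CLM, for the sum representation of `DmL`. -/
def Ecl (m : ℕ) (j : Fin m) : Cm m →L[ℂ] Cm m :=
  ContinuousLinearMap.pi fun j' =>
    if j' = j then ContinuousLinearMap.proj j else 0

lemma DmL_eq_sum (lam : Fin m → ℕ) (t : ℝ) :
    DmL lam t = ∑ j, ((t : ℂ) ^ lam j) • Ecl m j := by
  ext x j'
  simp only [ContinuousLinearMap.sum_apply, ContinuousLinearMap.smul_apply, Ecl,
    ContinuousLinearMap.pi_apply, DmL_apply]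
  rw [Finset.sum_apply]
  rw [Finset.sum_eq_single j']
  · simp
  · intro b _ hb
    simp [Ne.symm hb]
  · simp

lemma continuous_DmL (lam : Fin m → ℕ) : Continuous fun t : ℝ => DmL lam t := by
  simp only [DmL_eq_sum]
  exact continuous_finset_sum _ fun j _ =>
    ((Complex.continuous_ofReal.pow _)).smul continuous_const

lemma DmL_single (lam : Fin m → ℕ) (t : ℝ) (j : Fin m) :
    DmL lam t (Pi.single j (1:ℂ)) = ((t:ℂ) ^ lam j) • (Pi.single j 1 : Cm m) := by
  funext j'
  rcases eq_or_ne j' j with h | h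
  · subst h; simp
  · simp [Pi.single_apply, h]

lemma DmL_one (lam : Fin m → ℕ) (x : Cm m) : DmL lam 1 x = x := by
  funext j; simp

lemma DmL_zero (lam : Fin m → ℕ) (hlam : ∀ i, 0 < lam i) (x : Cm m) :
    DmL lam 0 x = 0 := by
  funext j
  simp [zero_pow (hlam j).ne']

/-- expansion of a continuous linear functional over the coordinates -/
lemma clm_apply_eq_sum (L : Cm m →L[ℂ] ℂ) (v : Cm m) :
    L v = ∑ j, v j * L (Pi.single j 1) := by
  have hv : v = ∑ j, v j • (Pi.single j (1 : ℂ) : Cm m) := by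
    funext j'
    rw [Finset.sum_apply]
    rw [Finset.sum_eq_single j']
    · simp
    · intro b _ hb
      simp [Pi.single_apply, Ne.symm hb]
    · simp
  conv_lhs => rw [hv]
  rw [map_sum]
  simp [smul_eq_mul]


section AnalyticPart

variable (lam : Fin m → ℕ)

lemma cont_integrand (a : ℕ) {n : ℕ} (p : FormalMultilinearSeries ℂ (Cm m) ℂ)
    (v : Fin n → Cm m) :
    Continuous fun t : ℝ => (t : ℂ) ^ a * (p n fun i => DmL lam t (v i)) :=
  (Complex.continuous_ofReal.pow a).mul <|
    (p n).cont.comp (continuous_pi fun i => continuous_DmL_x lam (v i))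

/-- the multilinear map obtained by integrating the dilated `p n`. -/
def qML (a : ℕ) (p : FormalMultilinearSeries ℂ (Cm m) ℂ) (n : ℕ) :
    MultilinearMap ℂ (fun _ : Fin n => Cm m) ℂ where
  toFun v := ∫ t in (0:ℝ)..1, (t : ℂ) ^ a * (p n fun i => DmL lam t (v i))
  map_update_add' {inst} v i x y := by
    have hupd : ∀ (t : ℝ) (z : Cm m),
        (fun j => DmL lam t (Function.update v i z j)) =
          Function.update (fun j => DmL lam t (v j)) i (DmL lam t z) := by
      intro t z; funext j
      exact Function.apply_update (fun _ w => DmL lam t w) v i z j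
    rw [intervalIntegral.integral_congr
      (g := fun t : ℝ => ((t : ℂ) ^ a * (p n fun j => DmL lam t (Function.update v i x j)))
        + ((t : ℂ) ^ a * (p n fun j => DmL lam t (Function.update v i y j))))
      (fun t _ => by
        beta_reduce
        rw [hupd t (x + y), hupd t x, hupd t y, map_add, (p n).map_update_add, mul_add])]
    exact intervalIntegral.integral_add
      ((cont_integrand lam a p _).intervalIntegrable _ _)
      ((cont_integrand lam a p _).intervalIntegrable _ _)
  map_update_smul' {inst} v i c x := by
    have hupd : ∀ (t : ℝ) (z : Cm m),
        (fun j => DmL lam t (Function.update v i z j)) =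
          Function.update (fun j => DmL lam t (v j)) i (DmL lam t z) := by
      intro t z; funext j
      exact Function.apply_update (fun _ w => DmL lam t w) v i z j
    rw [intervalIntegral.integral_congr
      (g := fun t : ℝ => c • ((t : ℂ) ^ a * (p n fun j => DmL lam t (Function.update v i x j))))
      (fun t _ => by
        beta_reduce
        rw [hupd t (c • x), hupd t x, _root_.map_smul, (p n).map_update_smul, smul_eq_mul, smul_eq_mul]
        ring)]
    exact intervalIntegral.integral_smul c _

lemma qML_bound (a : ℕ) (p : FormalMultilinearSeries ℂ (Cm m) ℂ) (n : ℕ)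
    (v : Fin n → Cm m) :
    ‖qML lam a p n v‖ ≤ ‖p n‖ * ∏ i, ‖v i‖ := by
  have hb : ∀ t ∈ Set.uIoc (0:ℝ) 1,
      ‖(t : ℂ) ^ a * (p n fun i => DmL lam t (v i))‖ ≤ ‖p n‖ * ∏ i, ‖v i‖ := by
    intro t ht
    rw [Set.uIoc_of_le zero_le_one] at ht
    have h01 : |t| ≤ 1 := abs_le.mpr ⟨by linarith [ht.1], ht.2⟩
    calc ‖(t : ℂ) ^ a * (p n fun i => DmL lam t (v i))‖
        = ‖(t : ℂ)‖ ^ a * ‖p n fun i => DmL lam t (v i)‖ := by rw [norm_mul, norm_pow]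
      _ ≤ 1 * (‖p n‖ * ∏ i, ‖DmL lam t (v i)‖) := by
          apply mul_le_mul _ ((p n).le_opNorm _) (norm_nonneg _) zero_le_one
          exact pow_le_one₀ (norm_nonneg _) (by rw [Complex.norm_real]; exact h01)
      _ ≤ ‖p n‖ * ∏ i, ‖v i‖ := by
          rw [one_mul]
          apply mul_le_mul_of_nonneg_left _ (norm_nonneg (p n))
          exact Finset.prod_le_prod (fun i _ => norm_nonneg _)
            (fun i _ => norm_DmL_le lam h01 (v i))
  have := intervalIntegral.norm_integral_le_of_norm_le_const hb
  show ‖∫ t in (0:ℝ)..1, (t : ℂ) ^ a * (p n fun i => DmL lam t (v i))‖ ≤ _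
  simpa using this

/-- the integrated formal multilinear series. -/
def qFS (a : ℕ) (p : FormalMultilinearSeries ℂ (Cm m) ℂ) :
    FormalMultilinearSeries ℂ (Cm m) ℂ := fun n =>
  (qML lam a p n).mkContinuous ‖p n‖ (qML_bound lam a p n)

lemma qFS_norm_le (a : ℕ) (p : FormalMultilinearSeries ℂ (Cm m) ℂ) (n : ℕ) :
    ‖qFS lam a p n‖ ≤ ‖p n‖ :=
  MultilinearMap.mkContinuous_norm_le _ (norm_nonneg _) _

theorem analyticAt_H (a : ℕ) {g : Cm m → ℂ} (hg : AnalyticAt ℂ g 0) :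
    AnalyticAt ℂ (fun x : Cm m => ∫ t in (0:ℝ)..1, (t : ℂ) ^ a * g (DmL lam t x)) 0 := by
  obtain ⟨p, rr, hp⟩ := hg
  obtain ⟨r', hr'1, hr'2⟩ := ENNReal.lt_iff_exists_nnreal_btwn.mp hp.r_pos
  have hsum : Summable fun n => ‖p n‖ * (r' : ℝ) ^ n :=
    p.summable_norm_mul_pow (lt_of_lt_of_le hr'2 hp.r_le)
  have hrad : (r' : ℝ≥0∞) ≤ (qFS lam a p).radius := by
    apply FormalMultilinearSeries.le_radius_of_summable_norm
    refine Summable.of_nonneg_of_le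
      (fun n => mul_nonneg (norm_nonneg _) (pow_nonneg r'.coe_nonneg _))
      (fun n => mul_le_mul_of_nonneg_right (qFS_norm_le lam a p n)
        (pow_nonneg r'.coe_nonneg _)) hsum
  have hball : HasFPowerSeriesOnBall
      (fun x : Cm m => ∫ t in (0:ℝ)..1, (t : ℂ) ^ a * g (DmL lam t x))
      (qFS lam a p) 0 r' := by
    refine ⟨hrad, hr'1, ?_⟩
    intro y hy
    rw [mem_emetric_ball_zero_iff] at hy
    have hynn : ‖y‖₊ < r' := by exact_mod_cast hy
    have hynorm : ‖y‖ < (r' : ℝ) := by exact_mod_cast hynn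
    have hptwise : ∀ t : ℝ, |t| ≤ 1 →
        HasSum (fun n => (t : ℂ) ^ a * (p n fun _ => DmL lam t y))
          ((t : ℂ) ^ a * g (DmL lam t y)) := by
      intro t ht
      have hmem : DmL lam t y ∈ Metric.eball (0 : Cm m) rr := by
        rw [mem_emetric_ball_zero_iff]
        have h1 : ‖DmL lam t y‖₊ ≤ ‖y‖₊ := norm_DmL_le lam ht y
        exact lt_of_le_of_lt (ENNReal.coe_le_coe.mpr h1)
          (lt_trans (ENNReal.coe_lt_coe.mpr hynn) hr'2)
      have h := hp.hasSum hmem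
      rw [zero_add] at h
      exact h.mul_left _
    rw [zero_add]
    have h1 : ∀ n, (qFS lam a p n fun _ => y)
        = ∫ t in Set.Ioc (0:ℝ) 1, (t : ℂ) ^ a * (p n fun _ => DmL lam t y) := by
      intro n
      show (∫ t in (0:ℝ)..1, (t : ℂ) ^ a * (p n fun _ => DmL lam t y)) = _
      rw [intervalIntegral.integral_of_le zero_le_one]
    rw [show (∫ t in (0:ℝ)..1, (t : ℂ) ^ a * g (DmL lam t y))
        = ∫ t in Set.Ioc (0:ℝ) 1, (t : ℂ) ^ a * g (DmL lam t y) from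
      intervalIntegral.integral_of_le zero_le_one]
    simp only [h1]
    have hsummy : Summable fun n => ‖p n‖ * ‖y‖ ^ n := by
      have := p.summable_norm_mul_pow (r := ‖y‖₊)
        (lt_of_lt_of_le (lt_trans (ENNReal.coe_lt_coe.mpr hynn) hr'2) hp.r_le)
      simpa [coe_nnnorm] using this
    apply MeasureTheory.hasSum_integral_of_dominated_convergence
      (bound := fun n (_ : ℝ) => ‖p n‖ * ‖y‖ ^ n)
    · intro n
      exact (cont_integrand lam a p fun _ => y).aestronglyMeasurable
    · intro n
      rw [ae_restrict_iff' measurableSet_Ioc]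
      apply ae_of_all
      intro t ht
      have h01 : |t| ≤ 1 := abs_le.mpr ⟨by linarith [ht.1], ht.2⟩
      calc ‖(t : ℂ) ^ a * (p n fun _ => DmL lam t y)‖
          = ‖(t : ℂ)‖ ^ a * ‖p n fun _ : Fin n => DmL lam t y‖ := by rw [norm_mul, norm_pow]
        _ ≤ 1 * (‖p n‖ * ∏ _i : Fin n, ‖DmL lam t y‖) := by
            apply mul_le_mul _ ((p n).le_opNorm _) (norm_nonneg _) zero_le_one
            exact pow_le_one₀ (norm_nonneg _) (by rw [Complex.norm_real]; exact h01)
        _ ≤ ‖p n‖ * ‖y‖ ^ n := by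
            rw [one_mul]
            apply mul_le_mul_of_nonneg_left _ (norm_nonneg (p n))
            calc (∏ _i : Fin n, ‖DmL lam t y‖) ≤ ∏ _i : Fin n, ‖y‖ :=
                  Finset.prod_le_prod (fun i _ => norm_nonneg _)
                    (fun i _ => norm_DmL_le lam h01 y)
              _ = ‖y‖ ^ n := by
                  rw [Finset.prod_const, Finset.card_univ, Fintype.card_fin]
    · exact ae_of_all _ fun t => hsummy
    · exact (MeasureTheory.integrableOn_const_iff).mpr (Or.inr measure_Ioc_lt_top)
    · rw [ae_restrict_iff' measurableSet_Ioc]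
      apply ae_of_all
      intro t ht
      exact hptwise t (abs_le.mpr ⟨by linarith [ht.1], ht.2⟩)
  exact hball.analyticAt

end AnalyticPart


section DerivPart

variable (lam : Fin m → ℕ)

lemma mem_ball_DmL {R : ℝ} {x : Cm m} (hx : ‖x‖ < R) {t : ℝ} (ht : |t| ≤ 1) :
    DmL lam t x ∈ ball (0 : Cm m) R :=
  mem_ball_zero_iff.mpr (lt_of_le_of_lt (norm_DmL_le lam ht x) hx)

lemma abs_le_one_of_Icc {t : ℝ} (ht : t ∈ Set.Icc (-1:ℝ) 1) : |t| ≤ 1 :=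
  abs_le.mpr ⟨ht.1, ht.2⟩

lemma Ioc_subset_Icc' : Set.Ioc (0:ℝ) 1 ⊆ Set.Icc (-1:ℝ) 1 :=
  fun t ht => ⟨by linarith [ht.1], ht.2⟩

lemma uIcc_subset_Icc' : Set.uIcc (0:ℝ) 1 ⊆ Set.Icc (-1:ℝ) 1 := by
  rw [Set.uIcc_of_le zero_le_one]
  exact fun t ht => ⟨by linarith [ht.1], ht.2⟩

lemma contOn_comp {R : ℝ} {g : Cm m → ℂ} (hgc : ContinuousOn g (ball (0:Cm m) R))
    {x : Cm m} (hx : ‖x‖ < R) (a : ℕ) :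
    ContinuousOn (fun t : ℝ => (t : ℂ) ^ a * g (DmL lam t x)) (Set.Icc (-1:ℝ) 1) := by
  apply ContinuousOn.mul ((Complex.continuous_ofReal.pow a).continuousOn)
  apply hgc.comp ((continuous_DmL_x lam x).continuousOn)
  intro t ht
  exact mem_ball_DmL lam hx (abs_le_one_of_Icc ht)

lemma contOn_fderiv_comp {R : ℝ} {g : Cm m → ℂ} (hg : AnalyticOnNhd ℂ g (ball (0:Cm m) R))
    {x : Cm m} (hx : ‖x‖ < R) (a : ℕ) :
    ContinuousOn (fun t : ℝ => ((t : ℂ) ^ a) • ((fderiv ℂ g (DmL lam t x)).comp (DmL lam t)))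
      (Set.Icc (-1:ℝ) 1) := by
  apply ContinuousOn.smul ((Complex.continuous_ofReal.pow a).continuousOn)
  apply ContinuousOn.clm_comp _ ((continuous_DmL lam).continuousOn)
  apply (hg.fderiv.continuousOn).comp ((continuous_DmL_x lam x).continuousOn)
  intro t ht
  exact mem_ball_DmL lam hx (abs_le_one_of_Icc ht)

theorem hasFDerivAt_H {R : ℝ} {g : Cm m → ℂ} (hg : AnalyticOnNhd ℂ g (ball (0:Cm m) R)) (a : ℕ)
    {x : Cm m} (hx : ‖x‖ < R) :
    HasFDerivAt (fun x' : Cm m => ∫ t in (0:ℝ)..1, (t : ℂ) ^ a * g (DmL lam t x'))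
      (∫ t in (0:ℝ)..1, ((t : ℂ) ^ a) • ((fderiv ℂ g (DmL lam t x)).comp (DmL lam t))) x := by
  obtain ⟨ρ, hρ1, hρ2⟩ := exists_between hx
  have hρ0 : 0 ≤ ρ := le_trans (norm_nonneg x) (le_of_lt hρ1)
  have hε : 0 < ρ - ‖x‖ := sub_pos.mpr hρ1
  have hball_sub : ∀ x' ∈ ball x (ρ - ‖x‖), ‖x'‖ < ρ := by
    intro x' hx'
    have h1 : ‖x' - x‖ < ρ - ‖x‖ := mem_ball_iff_norm.mp hx'
    have h2 : ‖x'‖ - ‖x‖ ≤ ‖x' - x‖ := norm_sub_norm_le x' x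
    linarith
  obtain ⟨M, hM⟩ := (isCompact_closedBall (0:Cm m) ρ).exists_bound_of_continuousOn
      ((hg.fderiv.continuousOn).mono (closedBall_subset_ball hρ2))
  have hM0 : 0 ≤ M := le_trans (norm_nonneg _) (hM 0 (mem_closedBall_self hρ0))
  have hIoc : Set.uIoc (0:ℝ) 1 = Set.Ioc 0 1 := Set.uIoc_of_le zero_le_one
  have hF_meas : ∀ᶠ x' in 𝓝 x, AEStronglyMeasurable
      (fun t : ℝ => (t : ℂ) ^ a * g (DmL lam t x'))
      (MeasureTheory.volume.restrict (Set.uIoc (0:ℝ) 1)) := by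
    filter_upwards [ball_mem_nhds x hε] with x' hx'
    rw [hIoc]
    exact ((contOn_comp lam hg.continuousOn (lt_trans (hball_sub x' hx') hρ2) a).mono
      Ioc_subset_Icc').aestronglyMeasurable measurableSet_Ioc
  have hF_int : IntervalIntegrable (fun t : ℝ => (t : ℂ) ^ a * g (DmL lam t x))
      MeasureTheory.volume 0 1 :=
    ((contOn_comp lam hg.continuousOn hx a).mono uIcc_subset_Icc').intervalIntegrable
  have hF'_meas : AEStronglyMeasurable
      (fun t : ℝ => ((t : ℂ) ^ a) • ((fderiv ℂ g (DmL lam t x)).comp (DmL lam t)))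
      (MeasureTheory.volume.restrict (Set.uIoc (0:ℝ) 1)) := by
    rw [hIoc]
    exact ((contOn_fderiv_comp lam hg hx a).mono
      Ioc_subset_Icc').aestronglyMeasurable measurableSet_Ioc
  have h_bound : ∀ᵐ t ∂(MeasureTheory.volume), t ∈ Set.uIoc (0:ℝ) 1 →
      ∀ x' ∈ ball x (ρ - ‖x‖),
        ‖((t : ℂ) ^ a) • ((fderiv ℂ g (DmL lam t x')).comp (DmL lam t))‖ ≤ M := by
    apply MeasureTheory.ae_of_all
    intro t ht x' hx'
    rw [hIoc] at ht
    have h01 : |t| ≤ 1 := abs_le.mpr ⟨by linarith [ht.1], ht.2⟩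
    have hmem : DmL lam t x' ∈ closedBall (0:Cm m) ρ :=
      mem_closedBall_zero_iff.mpr (le_of_lt (lt_of_le_of_lt (norm_DmL_le lam h01 x')
        (hball_sub x' hx')))
    calc ‖((t : ℂ) ^ a) • ((fderiv ℂ g (DmL lam t x')).comp (DmL lam t))‖
        ≤ ‖(t : ℂ) ^ a‖ * ‖(fderiv ℂ g (DmL lam t x')).comp (DmL lam t)‖ :=
          ContinuousLinearMap.opNorm_smul_le _ _
      _ ≤ 1 * (M * 1) := by
          apply mul_le_mul _ _ (norm_nonneg _) zero_le_one
          · rw [norm_pow, Complex.norm_real]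
            exact pow_le_one₀ (abs_nonneg t) h01
          · calc ‖(fderiv ℂ g (DmL lam t x')).comp (DmL lam t)‖
                ≤ ‖fderiv ℂ g (DmL lam t x')‖ * ‖DmL lam t‖ :=
                  ContinuousLinearMap.opNorm_comp_le _ _
              _ ≤ M * 1 := mul_le_mul (hM _ hmem) (opNorm_DmL_le lam h01)
                  (norm_nonneg _) hM0
      _ = M := by ring
  have h_diff : ∀ᵐ t ∂(MeasureTheory.volume), t ∈ Set.uIoc (0:ℝ) 1 →
      ∀ x' ∈ ball x (ρ - ‖x‖),
        HasFDerivAt (fun y : Cm m => (t : ℂ) ^ a * g (DmL lam t y))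
          (((t : ℂ) ^ a) • ((fderiv ℂ g (DmL lam t x')).comp (DmL lam t))) x' := by
    apply MeasureTheory.ae_of_all
    intro t ht x' hx'
    rw [hIoc] at ht
    have h01 : |t| ≤ 1 := abs_le.mpr ⟨by linarith [ht.1], ht.2⟩
    have hmem : DmL lam t x' ∈ ball (0:Cm m) R :=
      mem_ball_DmL lam (lt_trans (hball_sub x' hx') hρ2) h01
    have hgd : HasFDerivAt g (fderiv ℂ g (DmL lam t x')) (DmL lam t x') :=
      ((hg _ hmem).differentiableAt).hasFDerivAt
    exact (hgd.comp x' ((DmL lam t).hasFDerivAt)).const_mul _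
  exact intervalIntegral.hasFDerivAt_integral_of_dominated_of_fderiv_le
    (F := fun (x' : Cm m) (t : ℝ) => (t : ℂ) ^ a * g (DmL lam t x'))
    (F' := fun (x' : Cm m) (t : ℝ) =>
      ((t : ℂ) ^ a) • ((fderiv ℂ g (DmL lam t x')).comp (DmL lam t)))
    (ball_mem_nhds x hε) hF_meas hF_int hF'_meas h_bound intervalIntegrable_const h_diff

theorem integral_clm_apply {ψ : ℝ → (Cm m →L[ℂ] ℂ)}
    (hψ : IntervalIntegrable ψ MeasureTheory.volume 0 1) (v : Cm m) :
    (∫ t in (0:ℝ)..1, ψ t) v = ∫ t in (0:ℝ)..1, ψ t v := by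
  rw [intervalIntegral.integral_of_le zero_le_one,
    intervalIntegral.integral_of_le zero_le_one]
  exact ContinuousLinearMap.integral_apply
    ((intervalIntegrable_iff_integrableOn_Ioc_of_le zero_le_one).mp hψ) v

theorem hasDerivAt_G {R : ℝ} {g : Cm m → ℂ} (hg : AnalyticOnNhd ℂ g (ball (0:Cm m) R))
    {x : Cm m} (hx : ‖x‖ < R) (b : ℕ) {t : ℝ} (ht : |t| ≤ 1) :
    HasDerivAt (fun s : ℝ => ((s : ℂ)) ^ (b+1) * g (DmL lam s x))
      ((((b : ℂ) + 1) * (t : ℂ) ^ b) * g (DmL lam t x)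
        + (t : ℂ) ^ (b+1) *
          (fderiv ℂ g (DmL lam t x)) (fun j => ((lam j : ℂ)) * (t : ℂ) ^ (lam j - 1) * x j)) t := by
  have hmem : DmL lam t x ∈ ball (0:Cm m) R := mem_ball_DmL lam hx ht
  have hgd : HasFDerivAt g (fderiv ℂ g (DmL lam t x)) (DmL lam t x) :=
    ((hg _ hmem).differentiableAt).hasFDerivAt
  have hc : HasDerivAt (fun s : ℝ => DmL lam s x)
      (fun j => ((lam j : ℂ)) * (t : ℂ) ^ (lam j - 1) * x j) t := by
    refine hasDerivAt_pi.mpr fun j => ?_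
    have h1 : HasDerivAt (fun z : ℂ => z ^ lam j * x j)
        (((lam j : ℂ)) * (t : ℂ) ^ (lam j - 1) * x j) ((t : ℝ) : ℂ) :=
      (hasDerivAt_pow (lam j) ((t : ℝ) : ℂ)).mul_const (x j)
    exact h1.comp_ofReal
  have hcomp : HasDerivAt (fun s : ℝ => g (DmL lam s x))
      ((fderiv ℂ g (DmL lam t x)) (fun j => ((lam j : ℂ)) * (t : ℂ) ^ (lam j - 1) * x j)) t := by
    have h3 := (hgd.restrictScalars ℝ).comp_hasDerivAt t hc
    exact h3
  have hpow : HasDerivAt (fun s : ℝ => ((s : ℂ)) ^ (b+1)) (((b : ℂ) + 1) * (t : ℂ) ^ b) t := by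
    have h2 := (hasDerivAt_pow (b+1) ((t : ℝ) : ℂ)).comp_ofReal
    simpa using h2
  exact hpow.mul hcomp

end DerivPart

end RP
end RPAux

section MainAux

open Metric MeasureTheory

variable {m : ℕ}

lemma O_coe_smul (c : ℂ) (g : O m) :
    (((c • g : O m) : Cm m → ℂ)) = c • (g : Cm m → ℂ) := rfl

lemma O_coe_mul (g h : O m) :
    (((g * h : O m) : Cm m → ℂ)) = (g : Cm m → ℂ) * (h : Cm m → ℂ) := rfl

lemma O_coe_sum {ι : Type*} (s : Finset ι) (F : ι → O m) :
    ((((∑ i ∈ s, F i) : O m) : Cm m → ℂ)) = ∑ i ∈ s, ((F i : O m) : Cm m → ℂ) :=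
  AddSubmonoidClass.coe_finset_sum F s

lemma pd_apply (j : Fin m) (g : O m) (z : Cm m) :
    ((pd j g : O m) : Cm m → ℂ) z = fderiv ℂ (g : Cm m → ℂ) z (Pi.single j 1) := rfl

lemma extD_apply {q : ℕ} (ω : Form m q) (K : Fin (q+1) → Fin m) (z : Cm m) :
    ((extD ω K : O m) : Cm m → ℂ) z
      = ∑ i : Fin (q+1), (-1:ℂ)^(i:ℕ) *
          fderiv ℂ ((ω (K ∘ i.succAbove) : O m) : Cm m → ℂ) z (Pi.single (K i) 1) := by
  show ((((∑ i : Fin (q+1), ((-1:ℂ)^(i:ℕ)) • pd (K i) (ω (K ∘ i.succAbove))) : O m) : Cm m → ℂ)) z = _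
  rw [O_coe_sum, Finset.sum_apply]
  apply Finset.sum_congr rfl
  intro i _
  rw [O_coe_smul]
  simp [pd_apply, smul_eq_mul]

lemma cons_eq_comp_cycle {q : ℕ} (K : Fin (q+1) → Fin m) (i : Fin (q+1)) :
    (Fin.cons (K i) (K ∘ i.succAbove) : Fin (q+1) → Fin m) = K ∘ ⇑(i.cycleRange.symm) := by
  funext j
  cases j using Fin.cases with
  | zero => simp [Fin.cycleRange_symm_zero]
  | succ j => simp [Fin.cycleRange_symm_succ]

lemma cons_comp_zero_succAbove {q : ℕ} (c : Fin m) (K : Fin (q+1) → Fin m) :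
    ((Fin.cons c K : Fin (q+2) → Fin m) ∘ (0 : Fin (q+2)).succAbove) = K := by
  funext j
  simp [Fin.zero_succAbove]

lemma cons_comp_succ_succAbove {q : ℕ} (c : Fin m) (K : Fin (q+1) → Fin m) (i : Fin (q+1)) :
    ((Fin.cons c K : Fin (q+2) → Fin m) ∘ (Fin.succ i).succAbove)
      = Fin.cons c (K ∘ i.succAbove) := by
  funext j
  cases j using Fin.cases with
  | zero => simp [Fin.succ_succAbove_zero]
  | succ j => simp [Fin.succ_succAbove_succ]

/-- alternation: the coefficient at `cons (K i) (K ∘ succAbove i)` equals `(-1)^i` times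
the one at `K`. -/
lemma alt_cons_eq {q : ℕ} {ω : Form m (q+1)} (hAlt : IsAlt ω) (K : Fin (q+1) → Fin m)
    (i : Fin (q+1)) (y : Cm m) :
    ((ω (Fin.cons (K i) (K ∘ i.succAbove)) : O m) : Cm m → ℂ) y
      = (-1:ℂ)^(i:ℕ) * ((ω K : O m) : Cm m → ℂ) y := by
  rw [cons_eq_comp_cycle K i]
  have h := hAlt.2 K (i.cycleRange.symm)
  rw [h]
  rw [O_coe_smul]
  have hsign : ((Equiv.Perm.sign (i.cycleRange.symm) : ℤ) : ℂ) = (-1:ℂ)^(i:ℕ) := by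
    rw [Equiv.Perm.sign_symm, Fin.sign_cycleRange]
    push_cast
    rfl
  rw [hsign]
  simp [smul_eq_mul]

/-- expanding the closedness condition at index `cons c K`. -/
lemma closed_expand {q : ℕ} (ω : Form m (q+1)) (c : Fin m) (K : Fin (q+1) → Fin m) (y : Cm m)
    (h : ((extD ω (Fin.cons c K) : O m) : Cm m → ℂ) y = 0) :
    fderiv ℂ ((ω K : O m) : Cm m → ℂ) y (Pi.single c 1)
      = ∑ i : Fin (q+1), (-1:ℂ)^(i:ℕ) *
          fderiv ℂ ((ω (Fin.cons c (K ∘ i.succAbove)) : O m) : Cm m → ℂ) y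
            (Pi.single (K i) 1) := by
  rw [extD_apply] at h
  rw [Fin.sum_univ_succ] at h
  rw [cons_comp_zero_succAbove] at h
  simp only [Fin.cons_zero, Fin.cons_succ, Fin.val_zero, pow_zero, one_mul] at h
  have h2 : ∀ i : Fin (q+1),
      (-1:ℂ)^((Fin.succ i : Fin (q+2)) : ℕ) *
        fderiv ℂ ((ω ((Fin.cons c K : Fin (q+2) → Fin m) ∘ (Fin.succ i).succAbove) : O m) :
          Cm m → ℂ) y (Pi.single (K i) 1)
      = -((-1:ℂ)^(i:ℕ) *
          fderiv ℂ ((ω (Fin.cons c (K ∘ i.succAbove)) : O m) : Cm m → ℂ) y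
            (Pi.single (K i) 1)) := by
    intro i
    rw [cons_comp_succ_succAbove]
    rw [Fin.val_succ, pow_succ]
    ring
  rw [Finset.sum_congr rfl (fun i _ => h2 i)] at h
  rw [Finset.sum_neg_distrib] at h
  linear_combination h

end MainAux

/-- relative Poincaré lemma for finitely generated quasi-homogeneous
ideals: a closed `p`-form in `I·Λ^p` is the differential of a `(p-1)`-form in
`I·Λ^{p-1}`. -/
theorem statement_1 (m p k : ℕ) (lam : Fin m → ℕ) (hlam : ∀ i, 0 < lam i)
    (f : Fin k → O m) (δ : Fin k → ℕ)
    (hqh : ∀ (i : Fin k) (t : ℂ) (x : Cm m),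
      (f i : Cm m → ℂ) (fun j => t ^ lam j * x j) = t ^ δ i * (f i : Cm m → ℂ) x)
    (I : Ideal (O m)) (hI : I = Ideal.span (Set.range f))
    (ω : Form m (p + 1)) (hAlt : IsAlt ω)
    (hmem : memIF I ω) (hclosed : FormEq (extD ω) 0) :
    ∃ α : Form m p, memIF I α ∧ FormEq ω (extD α) := by
  classical
  subst hI
  -- decompose the coefficients of ω over the generators
  have hmem' : ∀ J : Fin (p+1) → Fin m, ∃ gd : Fin k → O m, ∑ i, gd i * f i = ω J := by
    intro J
    obtain ⟨c, hc⟩ := (Submodule.mem_span_range_iff_exists_fun (O m)).mp (hmem J)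
    exact ⟨c, by simpa [smul_eq_mul] using hc⟩
  choose gd hgd using hmem'
  -- a ball on which everything is analytic and dω vanishes
  have hev : ∀ᶠ y in 𝓝 (0 : Cm m),
      (∀ J : Fin (p+1) → Fin m, AnalyticAt ℂ ((ω J : O m) : Cm m → ℂ) y) ∧
      (∀ (J : Fin (p+1) → Fin m) (i : Fin k),
          AnalyticAt ℂ ((gd J i : O m) : Cm m → ℂ) y) ∧
      (∀ L : Fin (p+2) → Fin m, ((extD ω L : O m) : Cm m → ℂ) y = 0) := by
    refine Filter.Eventually.and ?_ (Filter.Eventually.and ?_ ?_)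
    · rw [Filter.eventually_all]
      exact fun J => (ω J).2.eventually_analyticAt
    · rw [Filter.eventually_all]
      intro J
      rw [Filter.eventually_all]
      exact fun i => (gd J i).2.eventually_analyticAt
    · rw [Filter.eventually_all]
      intro L
      have h := hclosed L
      filter_upwards [h] with y hy
      simpa using hy
  obtain ⟨r, hr0, hr⟩ := Metric.eventually_nhds_iff_ball.mp hev
  have hωan : ∀ J : Fin (p+1) → Fin m,
      AnalyticOnNhd ℂ ((ω J : O m) : Cm m → ℂ) (Metric.ball 0 r) :=
    fun J y hy => (hr y hy).1 J
  have hgan : ∀ (J : Fin (p+1) → Fin m) (i : Fin k),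
      AnalyticOnNhd ℂ ((gd J i : O m) : Cm m → ℂ) (Metric.ball 0 r) :=
    fun J i y hy => (hr y hy).2.1 J i
  have hdz : ∀ (L : Fin (p+2) → Fin m) (y : Cm m), y ∈ Metric.ball (0:Cm m) r →
      ((extD ω L : O m) : Cm m → ℂ) y = 0 :=
    fun L y hy => (hr y hy).2.2 L
  -- exponents
  set aJ : (Fin p → Fin m) → Fin m → ℕ := fun J c => (lam c - 1) + ∑ l, lam (J l) with haJ
  -- the homotopy coefficients
  have hfun_an : ∀ (J : Fin p → Fin m) (c : Fin m) (i : Fin k),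
      AnalyticAt ℂ (fun x : Cm m => ((lam c : ℂ)) * x c *
        ∫ t in (0:ℝ)..1, (t:ℂ) ^ (aJ J c + δ i) *
          ((gd (Fin.cons c J) i : O m) : Cm m → ℂ) (RP.DmL lam t x)) 0 := by
    intro J c i
    exact ((analyticAt_const.mul (coord_analyticAt m c 0)).mul
      (RP.analyticAt_H lam _ (gd (Fin.cons c J) i).2))
  set α : Form m p := fun J => ∑ c : Fin m, ∑ i : Fin k,
      f i * (⟨_, hfun_an J c i⟩ : O m) with hα
  refine ⟨α, ?_, ?_⟩
  · -- membership in I·Λ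
    intro J
    apply Ideal.sum_mem
    intro c _
    apply Ideal.sum_mem
    intro i _
    exact Ideal.mul_mem_right _ _ (Ideal.subset_span (Set.mem_range_self i))
  -- the form equality
  intro K
  apply Filter.eventuallyEq_of_mem (Metric.ball_mem_nhds (0:Cm m) hr0)
  intro x hx
  have hxn : ‖x‖ < r := mem_ball_zero_iff.mp hx
  -- notation
  set W : (Fin (p+1) → Fin m) → Cm m → ℂ := fun L => ((ω L : O m) : Cm m → ℂ) with hWdef
  set DW : (Fin (p+1) → Fin m) → Fin m → ℝ → ℂ :=
    fun L j t => fderiv ℂ (W L) (RP.DmL lam t x) (Pi.single j 1) with hDWdef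
  set N : ℕ := ∑ l, lam (K l) with hNdef
  have hNpos : 0 < N := by
    have h1 : lam (K 0) ≤ N := by
      rw [hNdef]
      exact Finset.single_le_sum (f := fun l : Fin (p+1) => lam (K l))
        (fun i _ => Nat.zero_le _) (Finset.mem_univ 0)
    have := hlam (K 0)
    omega
  obtain ⟨NN, hNN⟩ : ∃ NN, N = NN + 1 := ⟨N - 1, by omega⟩
  -- continuity facts
  have hmaps : ∀ t ∈ Set.Icc (-1:ℝ) 1, RP.DmL lam t x ∈ Metric.ball (0:Cm m) r :=
    fun t ht => RP.mem_ball_DmL lam hxn (RP.abs_le_one_of_Icc ht)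
  have hWcont : ∀ L, ContinuousOn (fun t : ℝ => W L (RP.DmL lam t x)) (Set.Icc (-1:ℝ) 1) :=
    fun L => ((hωan L).continuousOn).comp
      ((RP.continuous_DmL_x lam x).continuousOn) hmaps
  have hDWcont : ∀ L j, ContinuousOn (fun t : ℝ => DW L j t) (Set.Icc (-1:ℝ) 1) := by
    intro L j
    have h1 : ContinuousOn (fun t : ℝ => fderiv ℂ (W L) (RP.DmL lam t x))
        (Set.Icc (-1:ℝ) 1) :=
      ((hωan L).fderiv.continuousOn).comp
        ((RP.continuous_DmL_x lam x).continuousOn) hmaps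
    exact h1.clm_apply continuousOn_const
  have hWint : ∀ L (e : ℕ), IntervalIntegrable
      (fun t : ℝ => (t:ℂ)^e * W L (RP.DmL lam t x)) MeasureTheory.volume 0 1 :=
    fun L e => (((Complex.continuous_ofReal.pow e).continuousOn.mul
      ((hWcont L).mono RP.uIcc_subset_Icc'))).intervalIntegrable
  have hDWint : ∀ L j (e : ℕ), IntervalIntegrable
      (fun t : ℝ => (t:ℂ)^e * DW L j t) MeasureTheory.volume 0 1 :=
    fun L j e => (((Complex.continuous_ofReal.pow e).continuousOn.mul
      ((hDWcont L j).mono RP.uIcc_subset_Icc'))).intervalIntegrable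
  -- the key formula for the partial derivatives of the coefficients of α
  have hpd : ∀ (J : Fin p → Fin m) (j : Fin m),
      fderiv ℂ ((α J : O m) : Cm m → ℂ) x (Pi.single j 1)
        = (∑ c : Fin m, ((lam c : ℂ)) * x c *
            ∫ t in (0:ℝ)..1, (t:ℂ) ^ (aJ J c + lam j) * DW (Fin.cons c J) j t)
          + ((lam j : ℂ)) *
            ∫ t in (0:ℝ)..1, (t:ℂ) ^ (aJ J j) * W (Fin.cons j J) (RP.DmL lam t x) := by
    intro J j
    -- the local model β for α J
    set Hc : Fin m → Cm m → ℂ :=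
      fun c z => ∫ t in (0:ℝ)..1, (t:ℂ)^(aJ J c) * W (Fin.cons c J) (RP.DmL lam t z)
      with hHcdef
    have hβeq : ∀ z ∈ Metric.ball (0:Cm m) r,
        ((α J : O m) : Cm m → ℂ) z = ∑ c, ((lam c:ℂ) * z c * Hc c z) := by
      intro z hz
      have hzn : ‖z‖ < r := mem_ball_zero_iff.mp hz
      rw [hα]
      rw [O_coe_sum, Finset.sum_apply]
      apply Finset.sum_congr rfl
      intro c _
      rw [O_coe_sum, Finset.sum_apply]
      -- pointwise integrand identity
      have hptt : ∀ t : ℝ,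
          ∑ i : Fin k, (f i : Cm m → ℂ) z *
              ((t:ℂ) ^ (aJ J c + δ i) *
                ((gd (Fin.cons c J) i : O m) : Cm m → ℂ) (RP.DmL lam t z))
            = (t:ℂ)^(aJ J c) * W (Fin.cons c J) (RP.DmL lam t z) := by
        intro t
        have hWz : W (Fin.cons c J) (RP.DmL lam t z)
            = ∑ i : Fin k, ((gd (Fin.cons c J) i : O m) : Cm m → ℂ) (RP.DmL lam t z) *
                (f i : Cm m → ℂ) (RP.DmL lam t z) := by
          show ((ω (Fin.cons c J) : O m) : Cm m → ℂ) (RP.DmL lam t z) = _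
          rw [← hgd (Fin.cons c J), O_coe_sum, Finset.sum_apply]
          apply Finset.sum_congr rfl
          intro i _
          rw [O_coe_mul]
          rfl
        have hfi : ∀ i : Fin k, (f i : Cm m → ℂ) (RP.DmL lam t z)
            = (t:ℂ) ^ δ i * (f i : Cm m → ℂ) z := by
          intro i
          have h2 := hqh i ((t:ℝ):ℂ) z
          have h3 : RP.DmL lam t z = fun j => ((t:ℝ):ℂ) ^ lam j * z j := rfl
          rw [h3]
          exact h2
        rw [hWz, Finset.mul_sum]
        apply Finset.sum_congr rfl
        intro i _
        rw [hfi i, pow_add]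
        ring
      -- now compute the sum of integrals
      have hint : ∀ i : Fin k, IntervalIntegrable
          (fun t : ℝ => (t:ℂ) ^ (aJ J c + δ i) *
            ((gd (Fin.cons c J) i : O m) : Cm m → ℂ) (RP.DmL lam t z))
          MeasureTheory.volume 0 1 :=
        fun i => ((RP.contOn_comp lam ((hgan (Fin.cons c J) i).continuousOn) hzn
          (aJ J c + δ i)).mono RP.uIcc_subset_Icc').intervalIntegrable
      calc (∑ i : Fin k, ((f i * (⟨_, hfun_an J c i⟩ : O m) : O m) : Cm m → ℂ) z)
          = ∑ i : Fin k, (f i : Cm m → ℂ) z * ((lam c : ℂ) * z c *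
              ∫ t in (0:ℝ)..1, (t:ℂ) ^ (aJ J c + δ i) *
                ((gd (Fin.cons c J) i : O m) : Cm m → ℂ) (RP.DmL lam t z)) := by
            apply Finset.sum_congr rfl
            intro i _
            rw [O_coe_mul]
            rfl
        _ = (lam c : ℂ) * z c * ∑ i : Fin k,
              ∫ t in (0:ℝ)..1, (f i : Cm m → ℂ) z *
                ((t:ℂ) ^ (aJ J c + δ i) *
                  ((gd (Fin.cons c J) i : O m) : Cm m → ℂ) (RP.DmL lam t z)) := by
            rw [Finset.mul_sum]
            apply Finset.sum_congr rfl
            intro i _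
            rw [intervalIntegral.integral_const_mul]
            ring
        _ = (lam c : ℂ) * z c * ∫ t in (0:ℝ)..1, ∑ i : Fin k,
              (f i : Cm m → ℂ) z *
                ((t:ℂ) ^ (aJ J c + δ i) *
                  ((gd (Fin.cons c J) i : O m) : Cm m → ℂ) (RP.DmL lam t z)) := by
            rw [intervalIntegral.integral_finset_sum]
            intro i _
            exact (hint i).const_mul _
        _ = (lam c:ℂ) * z c * Hc c z := by
            rw [hHcdef]
            congr 1
            apply intervalIntegral.integral_congr
            intro t _
            exact hptt t
    -- derivative of the local model
    have hder : ∀ c : Fin m, HasFDerivAt (Hc c)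
        (∫ t in (0:ℝ)..1, ((t:ℂ)^(aJ J c)) •
          ((fderiv ℂ (W (Fin.cons c J)) (RP.DmL lam t x)).comp (RP.DmL lam t))) x :=
      fun c => RP.hasFDerivAt_H lam (hωan (Fin.cons c J)) (aJ J c) hxn
    have hβ : HasFDerivAt (fun z : Cm m => ∑ c, ((lam c:ℂ) * z c * Hc c z))
        (∑ c, (((lam c:ℂ) * x c) •
            (∫ t in (0:ℝ)..1, ((t:ℂ)^(aJ J c)) •
              ((fderiv ℂ (W (Fin.cons c J)) (RP.DmL lam t x)).comp (RP.DmL lam t)))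
          + (Hc c x) • (((lam c:ℂ)) • ContinuousLinearMap.proj c))) x := by
      apply HasFDerivAt.fun_sum
      intro c _
      exact ((ContinuousLinearMap.proj c).hasFDerivAt.const_mul ((lam c:ℂ))).mul (hder c)
    have hfd : fderiv ℂ ((α J : O m) : Cm m → ℂ) x
        = ∑ c, (((lam c:ℂ) * x c) •
            (∫ t in (0:ℝ)..1, ((t:ℂ)^(aJ J c)) •
              ((fderiv ℂ (W (Fin.cons c J)) (RP.DmL lam t x)).comp (RP.DmL lam t)))
          + (Hc c x) • (((lam c:ℂ)) • ContinuousLinearMap.proj c)) := by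
      have heq : ((α J : O m) : Cm m → ℂ) =ᶠ[𝓝 x]
          (fun z : Cm m => ∑ c, ((lam c:ℂ) * z c * Hc c z)) :=
        Filter.eventuallyEq_of_mem (Metric.isOpen_ball.mem_nhds hx) hβeq
      rw [heq.fderiv_eq]
      exact hβ.fderiv
    rw [hfd]
    -- evaluate at the basis vector
    rw [ContinuousLinearMap.sum_apply]
    have hval : ∀ c : Fin m,
        ((((lam c:ℂ) * x c) •
            (∫ t in (0:ℝ)..1, ((t:ℂ)^(aJ J c)) •
              ((fderiv ℂ (W (Fin.cons c J)) (RP.DmL lam t x)).comp (RP.DmL lam t)))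
          + (Hc c x) • (((lam c:ℂ)) • ContinuousLinearMap.proj c)) : Cm m →L[ℂ] ℂ)
            (Pi.single j 1)
        = (lam c:ℂ) * x c *
            (∫ t in (0:ℝ)..1, (t:ℂ) ^ (aJ J c + lam j) * DW (Fin.cons c J) j t)
          + Hc c x * ((lam c:ℂ) * (Pi.single j 1 : Cm m) c) := by
      intro c
      simp only [ContinuousLinearMap.add_apply, ContinuousLinearMap.smul_apply,
        ContinuousLinearMap.proj_apply]
      have happly : (∫ t in (0:ℝ)..1, ((t:ℂ)^(aJ J c)) •
            ((fderiv ℂ (W (Fin.cons c J)) (RP.DmL lam t x)).comp (RP.DmL lam t)))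
              (Pi.single j 1)
          = ∫ t in (0:ℝ)..1, (t:ℂ) ^ (aJ J c + lam j) * DW (Fin.cons c J) j t := by
        rw [RP.integral_clm_apply (((RP.contOn_fderiv_comp lam (hωan (Fin.cons c J)) hxn
          (aJ J c)).mono RP.uIcc_subset_Icc').intervalIntegrable)]
        apply intervalIntegral.integral_congr
        intro t _
        beta_reduce
        simp only [hDWdef, hWdef]
        rw [ContinuousLinearMap.smul_apply, ContinuousLinearMap.comp_apply,
          RP.DmL_single lam t j, map_smul]
        simp only [smul_eq_mul]
        rw [pow_add]
        ring
      rw [happly]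
      simp only [smul_eq_mul]
    rw [Finset.sum_congr rfl (fun c _ => hval c)]
    rw [Finset.sum_add_distrib]
    congr 1
    -- the second sum collapses
    have hsingle : ∀ c : Fin m, (Pi.single j 1 : Cm m) c = if c = j then 1 else 0 := by
      intro c
      rw [Pi.single_apply]
    calc (∑ c, Hc c x * ((lam c:ℂ) * (Pi.single j 1 : Cm m) c))
        = ∑ c, (if c = j then Hc c x * (lam c:ℂ) else 0) := by
          apply Finset.sum_congr rfl
          intro c _
          rw [hsingle c]
          split_ifs <;> ring
      _ = Hc j x * (lam j:ℂ) := by rw [Finset.sum_ite_eq' Finset.univ j]; simp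
      _ = (lam j:ℂ) * ∫ t in (0:ℝ)..1, (t:ℂ) ^ (aJ J j) * W (Fin.cons j J) (RP.DmL lam t x) := by
          rw [hHcdef]; ring
  -- now assemble
  show ((ω K : O m) : Cm m → ℂ) x = ((extD α K : O m) : Cm m → ℂ) x
  -- arithmetic of the exponents
  have hsumKi : ∀ i : Fin (p+1), lam (K i) + ∑ l, lam (K (i.succAbove l)) = N := by
    intro i
    rw [hNdef]
    exact (Fin.sum_univ_succAbove (fun l => lam (K l)) i).symm
  have hexp1 : ∀ (i : Fin (p+1)) (c : Fin m),
      aJ (K ∘ i.succAbove) c + lam (K i) = (lam c - 1) + N := by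
    intro i c
    have h1 := hsumKi i
    have h2 := hlam c
    show (lam c - 1) + (∑ l, lam ((K ∘ i.succAbove) l)) + lam (K i) = (lam c - 1) + N
    have h3 : ∑ l, lam ((K ∘ i.succAbove) l) = ∑ l, lam (K (i.succAbove l)) := rfl
    omega
  have hexp2 : ∀ i : Fin (p+1), aJ (K ∘ i.succAbove) (K i) = NN := by
    intro i
    have h1 := hsumKi i
    have h2 := hlam (K i)
    show (lam (K i) - 1) + (∑ l, lam ((K ∘ i.succAbove) l)) = NN
    have h3 : ∑ l, lam ((K ∘ i.succAbove) l) = ∑ l, lam (K (i.succAbove l)) := rfl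
    omega
  -- the alternation computation
  have hT2 : ∀ i : Fin (p+1),
      (∫ t in (0:ℝ)..1, (t:ℂ) ^ (aJ (K ∘ i.succAbove) (K i)) *
          W (Fin.cons (K i) (K ∘ i.succAbove)) (RP.DmL lam t x))
        = (-1:ℂ)^(i:ℕ) * ∫ t in (0:ℝ)..1, (t:ℂ)^NN * W K (RP.DmL lam t x) := by
    intro i
    rw [hexp2 i, ← intervalIntegral.integral_const_mul]
    apply intervalIntegral.integral_congr
    intro t _
    beta_reduce
    simp only [hWdef]
    rw [alt_cons_eq hAlt K i]
    ring
  -- the closedness computation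
  have hT1 : ∀ c : Fin m,
      (∑ i : Fin (p+1), (-1:ℂ)^(i:ℕ) *
          ∫ t in (0:ℝ)..1, (t:ℂ) ^ ((lam c - 1) + N) *
            DW (Fin.cons c (K ∘ i.succAbove)) (K i) t)
        = ∫ t in (0:ℝ)..1, (t:ℂ) ^ ((lam c - 1) + N) * DW K c t := by
    intro c
    rw [Finset.sum_congr rfl (fun (i : Fin (p+1)) _ =>
      (intervalIntegral.integral_const_mul ((-1:ℂ)^(i:ℕ)) _).symm)]
    rw [← intervalIntegral.integral_finset_sum (fun (i : Fin (p+1)) _ =>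
      (hDWint (Fin.cons c (K ∘ i.succAbove)) (K i) ((lam c - 1) + N)).const_mul _)]
    apply intervalIntegral.integral_congr
    intro t ht
    have hy : RP.DmL lam t x ∈ Metric.ball (0:Cm m) r := hmaps t (RP.uIcc_subset_Icc' ht)
    have hce := closed_expand ω c K (RP.DmL lam t x) (hdz (Fin.cons c K) _ hy)
    beta_reduce
    simp only [hDWdef, hWdef]
    rw [hce, Finset.mul_sum]
    apply Finset.sum_congr rfl
    intro i _
    ring
  -- the left-hand side: the value of `extD α` at `K`, `x`
  have hterm : ∀ i : Fin (p+1),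
      (-1:ℂ)^(i:ℕ) * fderiv ℂ ((α (K ∘ i.succAbove) : O m) : Cm m → ℂ) x
          (Pi.single (K i) 1)
        = (∑ c : Fin m, (lam c:ℂ) * x c * ((-1:ℂ)^(i:ℕ) *
              ∫ t in (0:ℝ)..1, (t:ℂ) ^ ((lam c - 1) + N) *
                DW (Fin.cons c (K ∘ i.succAbove)) (K i) t))
          + (lam (K i) : ℂ) *
              ((-1:ℂ)^(i:ℕ) * ((-1:ℂ)^(i:ℕ) *
                ∫ t in (0:ℝ)..1, (t:ℂ)^NN * W K (RP.DmL lam t x))) := by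
    intro i
    rw [hpd (K ∘ i.succAbove) (K i)]
    rw [hT2 i]
    simp only [hexp1 i]
    rw [mul_add, Finset.mul_sum]
    congr 1
    · apply Finset.sum_congr rfl
      intro c _
      ring
    · ring
  have hLHS : ((extD α K : O m) : Cm m → ℂ) x
      = (∑ c : Fin m, (lam c:ℂ) * x c *
            ∫ t in (0:ℝ)..1, (t:ℂ) ^ ((lam c - 1) + N) * DW K c t)
        + (N:ℂ) * ∫ t in (0:ℝ)..1, (t:ℂ)^NN * W K (RP.DmL lam t x) := by
    rw [extD_apply]
    rw [Finset.sum_congr rfl (fun i _ => hterm i)]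
    rw [Finset.sum_add_distrib]
    congr 1
    · -- first piece: swap sums and apply hT1
      rw [Finset.sum_comm]
      apply Finset.sum_congr rfl
      intro c _
      rw [← hT1 c, Finset.mul_sum]
    · -- second piece
      have hminus : ∀ i : Fin (p+1), (-1:ℂ)^(i:ℕ) * ((-1:ℂ)^(i:ℕ) *
          ∫ t in (0:ℝ)..1, (t:ℂ)^NN * W K (RP.DmL lam t x))
            = ∫ t in (0:ℝ)..1, (t:ℂ)^NN * W K (RP.DmL lam t x) := by
        intro i
        rw [← mul_assoc, ← pow_add]
        rw [Even.neg_one_pow ⟨(i:ℕ), by ring⟩, one_mul]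
      rw [Finset.sum_congr rfl (fun i _ => by rw [hminus i])]
      rw [← Finset.sum_mul]
      congr 1
      rw [hNdef]
      push_cast
      rfl
  -- the right-hand side: fundamental theorem of calculus
  have hvcont : ContinuousOn (fun t : ℝ =>
      (fderiv ℂ (W K) (RP.DmL lam t x))
        (fun j => ((lam j:ℂ)) * (t:ℂ) ^ (lam j - 1) * x j)) (Set.Icc (-1:ℝ) 1) := by
    have h1 : ContinuousOn (fun t : ℝ => fderiv ℂ (W K) (RP.DmL lam t x))
        (Set.Icc (-1:ℝ) 1) :=
      ((hωan K).fderiv.continuousOn).comp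
        ((RP.continuous_DmL_x lam x).continuousOn) hmaps
    apply h1.clm_apply
    apply Continuous.continuousOn
    apply continuous_pi
    intro j
    exact (continuous_const.mul (Complex.continuous_ofReal.pow _)).mul continuous_const
  have hφint : IntervalIntegrable (fun t : ℝ =>
      ((((NN:ℂ)+1) * (t:ℂ)^NN) * W K (RP.DmL lam t x)
        + (t:ℂ)^(NN+1) * (fderiv ℂ (W K) (RP.DmL lam t x))
            (fun j => ((lam j:ℂ)) * (t:ℂ) ^ (lam j - 1) * x j)))
      MeasureTheory.volume 0 1 := by
    apply ContinuousOn.intervalIntegrable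
    apply ContinuousOn.mono _ RP.uIcc_subset_Icc'
    apply ContinuousOn.add
    · exact ((continuous_const.mul (Complex.continuous_ofReal.pow NN)).continuousOn).mul (hWcont K)
    · exact ((Complex.continuous_ofReal.pow (NN+1)).continuousOn).mul hvcont
  have hFTC := intervalIntegral.integral_eq_sub_of_hasDerivAt
    (f := fun s : ℝ => ((s:ℂ)) ^ (NN+1) * W K (RP.DmL lam s x))
    (f' := fun t : ℝ => ((((NN:ℂ)+1) * (t:ℂ)^NN) * W K (RP.DmL lam t x)
        + (t:ℂ)^(NN+1) * (fderiv ℂ (W K) (RP.DmL lam t x))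
            (fun j => ((lam j:ℂ)) * (t:ℂ) ^ (lam j - 1) * x j)))
    (fun t ht => RP.hasDerivAt_G lam (hωan K) hxn NN
      (RP.abs_le_one_of_Icc (RP.uIcc_subset_Icc' ht)))
    hφint
  have hbound : (((1:ℝ):ℂ)) ^ (NN+1) * W K (RP.DmL lam (1:ℝ) x)
      - (((0:ℝ):ℂ)) ^ (NN+1) * W K (RP.DmL lam (0:ℝ) x) = W K x := by
    rw [RP.DmL_one lam x]
    rw [Complex.ofReal_one, one_pow, Complex.ofReal_zero,
      zero_pow (Nat.succ_ne_zero NN), zero_mul, sub_zero, one_mul]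
  have hAint : IntervalIntegrable
      (fun t : ℝ => (((NN:ℂ)+1) * (t:ℂ)^NN) * W K (RP.DmL lam t x))
      MeasureTheory.volume 0 1 :=
    ((((continuous_const.mul (Complex.continuous_ofReal.pow NN)).continuousOn).mul
      (hWcont K)).mono RP.uIcc_subset_Icc').intervalIntegrable
  have hBint : IntervalIntegrable
      (fun t : ℝ => (t:ℂ)^(NN+1) * (fderiv ℂ (W K) (RP.DmL lam t x))
          (fun j => ((lam j:ℂ)) * (t:ℂ) ^ (lam j - 1) * x j))
      MeasureTheory.volume 0 1 :=
    ((((Complex.continuous_ofReal.pow (NN+1)).continuousOn).mul hvcont).mono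
      RP.uIcc_subset_Icc').intervalIntegrable
  have hsplit := intervalIntegral.integral_add hAint hBint
  have hA : (∫ t in (0:ℝ)..1, (((NN:ℂ)+1) * (t:ℂ)^NN) * W K (RP.DmL lam t x))
      = ((NN:ℂ)+1) * ∫ t in (0:ℝ)..1, (t:ℂ)^NN * W K (RP.DmL lam t x) := by
    rw [← intervalIntegral.integral_const_mul]
    apply intervalIntegral.integral_congr
    intro t _
    beta_reduce
    ring
  have hB : (∫ t in (0:ℝ)..1, (t:ℂ)^(NN+1) * (fderiv ℂ (W K) (RP.DmL lam t x))
        (fun j => ((lam j:ℂ)) * (t:ℂ) ^ (lam j - 1) * x j))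
      = ∑ c : Fin m, (lam c:ℂ) * x c *
          ∫ t in (0:ℝ)..1, (t:ℂ) ^ ((lam c - 1) + N) * DW K c t := by
    have hptB : ∀ t : ℝ, (t:ℂ)^(NN+1) * (fderiv ℂ (W K) (RP.DmL lam t x))
          (fun j => ((lam j:ℂ)) * (t:ℂ) ^ (lam j - 1) * x j)
        = ∑ c : Fin m, (lam c:ℂ) * x c *
            ((t:ℂ) ^ ((lam c - 1) + N) * DW K c t) := by
      intro t
      rw [RP.clm_apply_eq_sum]
      rw [Finset.mul_sum]
      apply Finset.sum_congr rfl
      intro c _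
      simp only [hDWdef]
      have he : (lam c - 1) + N = (NN + 1) + (lam c - 1) := by
        have := hlam c
        omega
      rw [he, pow_add]
      ring
    rw [intervalIntegral.integral_congr (g := fun t : ℝ => ∑ c : Fin m,
        (lam c:ℂ) * x c * ((t:ℂ) ^ ((lam c - 1) + N) * DW K c t))
      (fun t _ => hptB t)]
    rw [intervalIntegral.integral_finset_sum (fun (c : Fin m) _ =>
      ((hDWint K c ((lam c - 1) + N)).const_mul ((lam c:ℂ) * x c)))]
    apply Finset.sum_congr rfl
    intro c _
    rw [intervalIntegral.integral_const_mul]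
  have hRHS : W K x
      = (∑ c : Fin m, (lam c:ℂ) * x c *
            ∫ t in (0:ℝ)..1, (t:ℂ) ^ ((lam c - 1) + N) * DW K c t)
        + (N:ℂ) * ∫ t in (0:ℝ)..1, (t:ℂ)^NN * W K (RP.DmL lam t x) := by
    have hNc : (N:ℂ) = (NN:ℂ) + 1 := by exact_mod_cast congrArg (Nat.cast (R := ℂ)) hNN
    calc W K x = ∫ t in (0:ℝ)..1,
          ((((NN:ℂ)+1) * (t:ℂ)^NN) * W K (RP.DmL lam t x)
            + (t:ℂ)^(NN+1) * (fderiv ℂ (W K) (RP.DmL lam t x))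
                (fun j => ((lam j:ℂ)) * (t:ℂ) ^ (lam j - 1) * x j)) := by
          rw [hFTC, hbound]
      _ = ((NN:ℂ)+1) * (∫ t in (0:ℝ)..1, (t:ℂ)^NN * W K (RP.DmL lam t x))
            + ∑ c : Fin m, (lam c:ℂ) * x c *
                ∫ t in (0:ℝ)..1, (t:ℂ) ^ ((lam c - 1) + N) * DW K c t := by
          rw [hsplit, hA, hB]
      _ = _ := by rw [hNc]; ring
  rw [hLHS]
  exact hRHS
end
end

section
/- Every germ of a closed 2-form ω on (C²,0) has algebraic restriction to the ideal J = ⟨y², z⁴⟩ of the form [ω]_J = A·[dy∧dz]_J + B·[z·dy∧dz]_J + C·[z²·dy∧dz]_J for some complex constants A, B, C; i.e., ω − (A + Bz + Cz²) dy∧dz lies in A²₀(J, C²). -/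
open Filter Topology

set_option maxHeartbeats 1000000
set_option synthInstance.maxHeartbeats 400000

noncomputable section

namespace Stmt8Aux

/-- The continuous linear map zeroing out the `i`-th coordinate. -/
def Lc (i : Fin 2) : Cm 2 →L[ℂ] Cm 2 :=
  ContinuousLinearMap.pi (fun j => if j = i then 0 else ContinuousLinearMap.proj j)

lemma Lc_apply (i j : Fin 2) (x : Cm 2) : Lc i x j = if j = i then 0 else x j := by
  by_cases h : j = i <;> simp [Lc, ContinuousLinearMap.pi_apply, h]

lemma Lc_idem (i : Fin 2) (x : Cm 2) : Lc i (Lc i x) = Lc i x := by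
  funext j; by_cases h : j = i <;> simp [Lc_apply, h]

lemma norm_Lc_le (i : Fin 2) (x : Cm 2) : ‖Lc i x‖ ≤ ‖x‖ := by
  refine (pi_norm_le_iff_of_nonneg (norm_nonneg x)).2 fun j => ?_
  rw [Lc_apply]
  by_cases h : j = i <;> simp [h]
  · exact norm_le_pi_norm x j

lemma sub_Lc (i : Fin 2) (x : Cm 2) : x - Lc i x = x i • (Pi.single i 1 : Cm 2) := by
  funext j
  by_cases h : j = i
  · subst h; simp [Lc_apply, Pi.single_apply]
  · simp [Lc_apply, h, Pi.single_apply]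

lemma norm_single_le (i : Fin 2) : ‖(Pi.single i 1 : Cm 2)‖ ≤ 1 := by
  refine (pi_norm_le_iff_of_nonneg zero_le_one).2 fun j => ?_
  by_cases h : j = i <;> simp [Pi.single_apply, h]

/-- Symmetrization of a continuous multilinear map. -/
def symmP (n : ℕ) (P : ContinuousMultilinearMap ℂ (fun _ : Fin n => Cm 2) ℂ) :
    ContinuousMultilinearMap ℂ (fun _ : Fin n => Cm 2) ℂ :=
  (n.factorial : ℂ)⁻¹ • ∑ σ : Equiv.Perm (Fin n), P.domDomCongr σ

lemma symmP_perm {n : ℕ} (P : ContinuousMultilinearMap ℂ (fun _ : Fin n => Cm 2) ℂ)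
    (τ : Equiv.Perm (Fin n)) (v : Fin n → Cm 2) :
    symmP n P (fun j => v (τ j)) = symmP n P v := by
  simp only [symmP, ContinuousMultilinearMap.smul_apply, ContinuousMultilinearMap.sum_apply,
    ContinuousMultilinearMap.domDomCongr_apply]
  congr 1
  have := Equiv.sum_comp (Equiv.mulLeft τ) (fun σ : Equiv.Perm (Fin n) => P (fun i => v (σ i)))
  simpa [Equiv.Perm.mul_apply] using this

lemma symmP_diag {n : ℕ} (P : ContinuousMultilinearMap ℂ (fun _ : Fin n => Cm 2) ℂ)
    (x : Cm 2) : symmP n P (fun _ => x) = P (fun _ => x) := by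
  simp only [symmP, ContinuousMultilinearMap.smul_apply, ContinuousMultilinearMap.sum_apply,
    ContinuousMultilinearMap.domDomCongr_apply]
  rw [Finset.sum_const, Finset.card_univ, Fintype.card_perm, Fintype.card_fin]
  rw [nsmul_eq_mul, smul_eq_mul, ← mul_assoc, inv_mul_cancel₀
    (by exact_mod_cast Nat.factorial_ne_zero n), one_mul]

lemma norm_symmP_le {n : ℕ} (P : ContinuousMultilinearMap ℂ (fun _ : Fin n => Cm 2) ℂ) :
    ‖symmP n P‖ ≤ ‖P‖ := by
  refine ContinuousMultilinearMap.opNorm_le_bound (norm_nonneg P) fun v => ?_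
  simp only [symmP, ContinuousMultilinearMap.smul_apply, ContinuousMultilinearMap.sum_apply,
    ContinuousMultilinearMap.domDomCongr_apply]
  have hterm : ∀ σ : Equiv.Perm (Fin n), ‖P fun i => v (σ i)‖ ≤ ‖P‖ * ∏ i, ‖v i‖ := by
    intro σ
    calc ‖P fun i => v (σ i)‖ ≤ ‖P‖ * ∏ i, ‖v (σ i)‖ := P.le_opNorm _
    _ = ‖P‖ * ∏ i, ‖v i‖ := by rw [Equiv.prod_comp σ (fun i => ‖v i‖)]
  calc ‖(n.factorial : ℂ)⁻¹ • ∑ σ : Equiv.Perm (Fin n), P fun i => v (σ i)‖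
      = (n.factorial : ℝ)⁻¹ * ‖∑ σ : Equiv.Perm (Fin n), P fun i => v (σ i)‖ := by
        rw [norm_smul]; norm_num
  _ ≤ (n.factorial : ℝ)⁻¹ * ∑ _σ : Equiv.Perm (Fin n), (‖P‖ * ∏ i, ‖v i‖) := by
        gcongr
        exact (norm_sum_le _ _).trans (Finset.sum_le_sum fun σ _ => hterm σ)
  _ ≤ ‖P‖ * ∏ i, ‖v i‖ := by
        rw [Finset.sum_const, Finset.card_univ, Fintype.card_perm, Fintype.card_fin, nsmul_eq_mul,
          ← mul_assoc, inv_mul_cancel₀ (by exact_mod_cast Nat.factorial_ne_zero n), one_mul]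

lemma telescope (m : ℕ) (i : Fin 2)
    (P : ContinuousMultilinearMap ℂ (fun _ : Fin (m + 1) => Cm 2) ℂ)
    (hsymm : ∀ (τ : Equiv.Perm (Fin (m + 1))) (v : Fin (m + 1) → Cm 2),
      P (fun j => v (τ j)) = P v)
    (x : Cm 2) :
    (P fun _ => x) - (P fun _ => Lc i x) =
      x i • ∑ k : Fin (m + 1),
        P (Fin.cons (Pi.single i 1)
          (fun j : Fin m => if (j : ℕ) < (k : ℕ) then x else Lc i x)) := by
  have key : ∀ t, ∀ ht : t < m + 1,
      P (fun j : Fin (m+1) => if (j : ℕ) < t + 1 then x else Lc i x)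
        - P (fun j : Fin (m+1) => if (j : ℕ) < t then x else Lc i x)
      = x i • P (Fin.cons (Pi.single i 1)
          (fun j : Fin m => if (j : ℕ) < t then x else Lc i x)) := by
    intro t ht
    have h1 : (fun j : Fin (m+1) => if (j : ℕ) < t + 1 then x else Lc i x)
        = Function.update (fun j : Fin (m+1) => if (j : ℕ) < t then x else Lc i x) ⟨t, ht⟩ x := by
      funext j
      rw [Function.update_apply]
      by_cases h : j = ⟨t, ht⟩
      · subst h; simp
      · have hne : (j : ℕ) ≠ t := fun hc => h (Fin.ext hc)
        have hiff : ((j : ℕ) < t + 1) = ((j : ℕ) < t) := by apply propext; omega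
        simp [h, hiff]
    have h2 : (fun j : Fin (m+1) => if (j : ℕ) < t then x else Lc i x)
        = Function.update (fun j : Fin (m+1) => if (j : ℕ) < t then x else Lc i x) ⟨t, ht⟩
            (Lc i x) := by
      funext j
      rw [Function.update_apply]
      by_cases h : j = ⟨t, ht⟩
      · subst h; simp
      · simp [h]
    rw [h1]
    nth_rewrite 2 [h2]
    rw [← P.map_update_sub, sub_Lc, P.map_update_smul]
    congr 1
    have h4 : (fun j => Function.update
          (fun j : Fin (m+1) => if (j : ℕ) < t then x else Lc i x) ⟨t, ht⟩ (Pi.single i 1)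
          ((⟨t, ht⟩ : Fin (m+1)).cycleRange.symm j))
        = Fin.cons (Pi.single i 1)
            (fun j : Fin m => if (j : ℕ) < t then x else Lc i x) := by
      funext j
      refine Fin.cases ?_ (fun j' => ?_) j
      · rw [Fin.cycleRange_symm_zero, Function.update_self, Fin.cons_zero]
      · rw [Fin.cycleRange_symm_succ, Fin.cons_succ,
          Function.update_of_ne (Fin.succAbove_ne ⟨t, ht⟩ j')]
        have hval : (((⟨t, ht⟩ : Fin (m+1)).succAbove j' : Fin (m+1)) : ℕ)
            = if (j' : ℕ) < t then (j' : ℕ) else (j' : ℕ) + 1 := by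
          by_cases hc : (j' : ℕ) < t
          · rw [Fin.succAbove_of_castSucc_lt, Fin.coe_castSucc, if_pos hc]
            rw [Fin.lt_def, Fin.coe_castSucc]; exact hc
          · rw [Fin.succAbove_of_le_castSucc, Fin.val_succ, if_neg hc]
            rw [Fin.le_def, Fin.coe_castSucc]; exact Nat.le_of_not_lt hc
        by_cases hc : (j' : ℕ) < t
        · simp [hval, hc]
        · have hc2 : ¬((j' : ℕ) + 1 < t) := by omega
          simp [hval, hc, hc2]
    rw [← h4, hsymm]
  have hTm : P (fun j : Fin (m+1) => if (j : ℕ) < m + 1 then x else Lc i x) = P fun _ => x := by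
    congr 1; funext j; simp [j.isLt]
  have hT0 : P (fun j : Fin (m+1) => if (j : ℕ) < 0 then x else Lc i x)
      = P fun _ => Lc i x := by
    congr 1
  calc (P fun _ => x) - (P fun _ => Lc i x)
      = (fun t => P (fun j : Fin (m+1) => if (j : ℕ) < t then x else Lc i x)) (m+1)
        - (fun t => P (fun j : Fin (m+1) => if (j : ℕ) < t then x else Lc i x)) 0 := by
        simp only []; rw [hTm, hT0]
  _ = ∑ t ∈ Finset.range (m+1),
        ((fun t => P (fun j : Fin (m+1) => if (j : ℕ) < t then x else Lc i x)) (t+1)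
          - (fun t => P (fun j : Fin (m+1) => if (j : ℕ) < t then x else Lc i x)) t) :=
      (Finset.sum_range_sub
        (fun t => P (fun j : Fin (m+1) => if (j : ℕ) < t then x else Lc i x)) (m+1)).symm
  _ = ∑ t ∈ Finset.range (m+1),
        x i • P (Fin.cons (Pi.single i 1)
          fun j : Fin m => if (j:ℕ) < t then x else Lc i x) :=
      Finset.sum_congr rfl fun t ht => key t (Finset.mem_range.1 ht)
  _ = x i • ∑ k : Fin (m+1),
        P (Fin.cons (Pi.single i 1)
          fun j : Fin m => if (j:ℕ) < (k:ℕ) then x else Lc i x) := by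
      rw [Fin.sum_univ_eq_sum_range
        (fun t => P (Fin.cons (Pi.single i 1)
          fun j : Fin m => if (j:ℕ) < t then x else Lc i x)) (m+1),
        Finset.smul_sum]

/-- Division by a coordinate: any analytic germ `f` on `ℂ²` can be written as
`f x = f (Lc i x) + x i * g x` with `g` analytic. -/
theorem div_coord (i : Fin 2) (f : Cm 2 → ℂ) (hf : AnalyticAt ℂ f 0) :
    ∃ g : Cm 2 → ℂ, AnalyticAt ℂ g 0 ∧
      ∀ᶠ x in 𝓝 (0 : Cm 2), f x = f (Lc i x) + x i * g x := by
  obtain ⟨p, hp⟩ := hf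
  obtain ⟨r, hfp⟩ := hp
  set ps : ∀ n, ContinuousMultilinearMap ℂ (fun _ : Fin n => Cm 2) ℂ :=
    fun n => symmP n (p n) with hps
  have hsymm : ∀ n (τ : Equiv.Perm (Fin n)) (v : Fin n → Cm 2),
      ps n (fun j => v (τ j)) = ps n v := fun n => symmP_perm (p n)
  set q : FormalMultilinearSeries ℂ (Cm 2) ℂ := fun m =>
    ∑ k : Fin (m+1), ((ps (m+1)).curryLeft (Pi.single i 1)).compContinuousLinearMap
      (fun j : Fin m => if (j : ℕ) < (k : ℕ) then ContinuousLinearMap.id ℂ (Cm 2) else Lc i)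
    with hq
  have hq_apply : ∀ (m : ℕ) (v : Fin m → Cm 2),
      q m v = ∑ k : Fin (m+1), ps (m+1)
        (Fin.cons (Pi.single i 1)
          (fun j : Fin m => if (j : ℕ) < (k : ℕ) then v j else Lc i (v j))) := by
    intro m v
    rw [hq]
    rw [ContinuousMultilinearMap.sum_apply]
    refine Finset.sum_congr rfl fun k _ => ?_
    rw [ContinuousMultilinearMap.compContinuousLinearMap_apply,
      ContinuousMultilinearMap.curryLeft_apply]
    congr 1
    funext j
    refine Fin.cases rfl (fun j' => ?_) j
    rw [Fin.cons_succ, Fin.cons_succ]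
    by_cases h : (j' : ℕ) < (k : ℕ) <;> simp [h]
  have hq_norm : ∀ m : ℕ, ‖q m‖ ≤ ((m : ℝ) + 1) * ‖p (m+1)‖ := by
    intro m
    calc ‖q m‖ ≤ ∑ _k : Fin (m+1), ‖p (m+1)‖ := by
          refine (norm_sum_le _ _).trans (Finset.sum_le_sum fun k _ => ?_)
          refine ContinuousMultilinearMap.opNorm_le_bound (norm_nonneg _) fun v => ?_
          rw [ContinuousMultilinearMap.compContinuousLinearMap_apply,
            ContinuousMultilinearMap.curryLeft_apply]
          refine le_trans ((ps (m+1)).le_opNorm _) ?_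
          rw [Fin.prod_univ_succ]
          simp only [Fin.cons_zero, Fin.cons_succ]
          have h0 : ‖ps (m+1)‖ ≤ ‖p (m+1)‖ := norm_symmP_le _
          have hsingle := norm_single_le i
          have htail : ∏ j : Fin m, ‖(if (j:ℕ) < (k:ℕ) then ContinuousLinearMap.id ℂ (Cm 2)
              else Lc i) (v j)‖ ≤ ∏ j : Fin m, ‖v j‖ := by
            refine Finset.prod_le_prod (fun j _ => norm_nonneg _) (fun j _ => ?_)
            by_cases h : (j:ℕ) < (k:ℕ)
            · simp [h]
            · simp only [h, if_false]; exact norm_Lc_le i (v j)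
          calc ‖ps (m+1)‖ * (‖(Pi.single i 1 : Cm 2)‖
                * ∏ j : Fin m, ‖(if (j:ℕ) < (k:ℕ) then ContinuousLinearMap.id ℂ (Cm 2)
                    else Lc i) (v j)‖)
              ≤ ‖p (m+1)‖ * (1 * ∏ j : Fin m, ‖v j‖) := by
                have hp1 : (0:ℝ) ≤ ∏ j : Fin m, ‖v j‖ :=
                  Finset.prod_nonneg fun j _ => norm_nonneg _
                have hp2 : (0:ℝ) ≤ ∏ j : Fin m, ‖(if (j:ℕ) < (k:ℕ)
                    then ContinuousLinearMap.id ℂ (Cm 2) else Lc i) (v j)‖ :=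
                  Finset.prod_nonneg fun j _ => norm_nonneg _
                have hin : ‖(Pi.single i 1 : Cm 2)‖
                    * ∏ j : Fin m, ‖(if (j:ℕ) < (k:ℕ) then ContinuousLinearMap.id ℂ (Cm 2)
                        else Lc i) (v j)‖ ≤ 1 * ∏ j : Fin m, ‖v j‖ :=
                  mul_le_mul hsingle htail hp2 zero_le_one
                exact mul_le_mul h0 hin (mul_nonneg (norm_nonneg _) hp2) (norm_nonneg _)
          _ = ‖p (m+1)‖ * ∏ j : Fin m, ‖v j‖ := by rw [one_mul]
    _ = ((m : ℝ) + 1) * ‖p (m+1)‖ := by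
        rw [Finset.sum_const, Finset.card_univ, Fintype.card_fin, nsmul_eq_mul]; push_cast; ring
  obtain ⟨a, ha0, har⟩ := ENNReal.lt_iff_exists_nnreal_btwn.mp hfp.r_pos
  have ha0' : (0:ℝ) < (a:ℝ) := by exact_mod_cast ha0
  obtain ⟨C, hC0, hC⟩ := p.norm_mul_pow_le_of_lt_radius (har.trans_le hfp.r_le)
  have hqrad : 0 < q.radius := by
    have hb : ∀ m : ℕ, ‖q m‖ * ((a / 2 : NNReal) : ℝ) ^ m ≤ C * 2 / (a:ℝ) := by
      intro m
      have hcast : ((a / 2 : NNReal) : ℝ) = (a:ℝ) / 2 := by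
        push_cast; ring
      rw [hcast]
      have hpow : (0:ℝ) ≤ ((a:ℝ)/2) ^ m := by positivity
      have h1 : ‖q m‖ * ((a:ℝ)/2)^m ≤ (((m:ℝ)+1) * ‖p (m+1)‖) * ((a:ℝ)/2)^m :=
        mul_le_mul_of_nonneg_right (hq_norm m) hpow
      have h2 : ((m:ℝ)+1) / 2^m ≤ 2 := by
        rw [div_le_iff₀ (by positivity)]
        have h2' : (m:ℝ) < 2^m := by exact_mod_cast Nat.lt_two_pow_self (n := m)
        have h2'' : (1:ℝ) ≤ 2^m := by exact_mod_cast Nat.one_le_two_pow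
        linarith
      have h3 : (((m:ℝ)+1) * ‖p (m+1)‖) * ((a:ℝ)/2)^m
          = (‖p (m+1)‖ * (a:ℝ)^(m+1)) * (((m:ℝ)+1) / 2^m) / (a:ℝ) := by
        rw [div_pow, pow_succ]
        field_simp
      have h4 : (‖p (m+1)‖ * (a:ℝ)^(m+1)) * (((m:ℝ)+1) / 2^m) ≤ C * 2 := by
        refine mul_le_mul (hC (m+1)) h2 (by positivity) hC0.le
      have h5 : (‖p (m+1)‖ * (a:ℝ)^(m+1)) * (((m:ℝ)+1) / 2^m) / (a:ℝ) ≤ C * 2 / (a:ℝ) :=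
        (div_le_div_iff_of_pos_right ha0').2 h4
      calc ‖q m‖ * ((a:ℝ)/2)^m ≤ _ := h1
      _ = _ := h3
      _ ≤ C * 2 / (a:ℝ) := h5
    have hle := q.le_radius_of_bound (C * 2 / (a:ℝ)) hb
    refine lt_of_lt_of_le ?_ hle
    have ha2 : 0 < a := by exact_mod_cast ha0
    have : 0 < a / 2 := half_pos ha2
    exact_mod_cast this
  set g : Cm 2 → ℂ := q.sum with hg
  have hgball : HasFPowerSeriesOnBall g q 0 q.radius := q.hasFPowerSeriesOnBall hqrad
  refine ⟨g, hgball.analyticAt, ?_⟩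
  filter_upwards [EMetric.ball_mem_nhds (0 : Cm 2) hfp.r_pos,
    EMetric.ball_mem_nhds (0 : Cm 2) hqrad] with x hx hx'
  have hxL : Lc i x ∈ Metric.eball (0 : Cm 2) r := by
    rw [mem_emetric_ball_zero_iff] at hx ⊢
    refine lt_of_le_of_lt ?_ hx
    rw [← ofReal_norm, ← ofReal_norm]
    exact ENNReal.ofReal_le_ofReal (norm_Lc_le i x)
  have hs1 : HasSum (fun n => p n fun _ => x) (f x) := by
    have := hfp.hasSum (y := x) (by simpa using hx)
    simpa using this
  have hs2 : HasSum (fun n => p n fun _ => Lc i x) (f (Lc i x)) := by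
    have := hfp.hasSum (y := Lc i x) (by simpa using hxL)
    simpa using this
  have hs3 : HasSum (fun n => q n fun _ => x) (g x) := by
    have := hgball.hasSum (y := x) (by simpa using hx')
    simpa using this
  set pdiff : ℕ → ℂ := fun n => (ps n fun _ => x) - (ps n fun _ => Lc i x) with hpdiff
  have h1 : HasSum pdiff (f x - f (Lc i x)) := by
    refine (hs1.sub hs2).congr_fun fun n => ?_
    show (symmP n (p n) fun _ => x) - (symmP n (p n) fun _ => Lc i x) = _
    rw [symmP_diag, symmP_diag]
  have htel : ∀ m : ℕ, pdiff (m + 1) = x i * (q m fun _ => x) := by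
    intro m
    have ht := telescope m i (ps (m+1)) (hsymm (m+1)) x
    calc pdiff (m+1) = (ps (m+1) fun _ => x) - (ps (m+1) fun _ => Lc i x) := rfl
    _ = x i • ∑ k : Fin (m+1), ps (m+1) (Fin.cons (Pi.single i 1)
          fun j : Fin m => if (j:ℕ) < (k:ℕ) then x else Lc i x) := ht
    _ = x i * (q m fun _ => x) := by rw [hq_apply, smul_eq_mul]
  have h2 : HasSum (fun m => pdiff (m + 1)) (x i * g x) :=
    (hs3.mul_left (x i)).congr_fun htel
  have hpd0 : pdiff 0 = 0 := by
    show (ps 0 fun _ => x) - (ps 0 fun _ => Lc i x) = 0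
    have he0 : (fun _ : Fin 0 => x) = (fun _ : Fin 0 => Lc i x) := funext fun j => j.elim0
    rw [he0, sub_self]
  have h2' : HasSum pdiff (x i * g x) := by
    have := (hasSum_nat_add_iff (f := pdiff) 1).mp h2
    simpa [hpd0] using this
  have hfin := h1.unique h2'
  linear_combination hfin

lemma fin2 (a : Fin 2) : a = 0 ∨ a = 1 := by omega

lemma anaL (i : Fin 2) {f : Cm 2 → ℂ} (hf : AnalyticAt ℂ f 0) :
    AnalyticAt ℂ (fun x => f (Lc i x)) 0 := by
  have h0 : Lc i (0 : Cm 2) = 0 := map_zero _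
  have h1 : AnalyticAt ℂ f (Lc i 0) := by rwa [h0]
  have := h1.comp ((Lc i).analyticAt 0)
  exact this

lemma Lc10 (x : Cm 2) : Lc 1 (Lc 0 x) = 0 := by
  funext j
  rcases fin2 j with h | h <;> subst h <;> simp [Lc_apply]

lemma Lc_single (i : Fin 2) : Lc i (Pi.single i 1 : Cm 2) = 0 := by
  funext j
  by_cases h : j = i
  · simp [Lc_apply, h]
  · simp [Lc_apply, h, Pi.single_eq_of_ne h]

lemma fderiv_single_zero {W : Cm 2 → ℂ} (hW : AnalyticAt ℂ W 0)
    (hinv : ∀ x, W (Lc 0 x) = W x) :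
    ∀ᶠ x in 𝓝 (0 : Cm 2), fderiv ℂ W x (Pi.single 0 1) = 0 := by
  have hev := hW.eventually_analyticAt
  have htend : Filter.Tendsto (fun x : Cm 2 => Lc 0 x) (𝓝 0) (𝓝 0) := by
    have := (Lc 0).continuous.tendsto (0 : Cm 2)
    simpa [map_zero] using this
  filter_upwards [htend.eventually hev] with x hx
  have hdiff : DifferentiableAt ℂ W (Lc 0 x) := hx.differentiableAt
  have heq : W = fun y => W (Lc 0 y) := funext fun y => (hinv y).symm
  have hcomp : fderiv ℂ (fun y => W (Lc 0 y)) x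
      = (fderiv ℂ W (Lc 0 x)).comp (Lc 0) := by
    have h2 := fderiv_comp (g := W) (f := fun y : Cm 2 => Lc 0 y) x hdiff
      ((Lc 0).differentiableAt)
    rw [(Lc 0).fderiv] at h2
    exact h2
  conv_lhs => rw [heq]
  rw [hcomp]
  simp [ContinuousLinearMap.comp_apply, Lc_single]

lemma pd0_sq_mul {Wf : Cm 2 → ℂ} (hW : AnalyticAt ℂ Wf 0)
    (hinv : ∀ x, Wf (Lc 0 x) = Wf x) :
    ∀ᶠ x in 𝓝 (0 : Cm 2),
      fderiv ℂ (fun y : Cm 2 => (1/2 : ℂ) * (y 0 * y 0 * Wf y)) x (Pi.single 0 1)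
        = x 0 * Wf x := by
  filter_upwards [hW.eventually_analyticAt, fderiv_single_zero hW hinv] with x hx hd0
  have hp : HasFDerivAt (fun y : Cm 2 => y 0)
      (ContinuousLinearMap.proj (R := ℂ) (φ := fun _ : Fin 2 => ℂ) 0) x :=
    hasFDerivAt_apply 0 x
  have hWd : HasFDerivAt Wf (fderiv ℂ Wf x) x := hx.differentiableAt.hasFDerivAt
  have h := ((hp.mul hp).mul hWd).const_mul ((1:ℂ)/2)
  rw [show (fun y : Cm 2 => (1/2 : ℂ) * (y 0 * y 0 * Wf y))
    = fun y => 1/2 * (((fun y : Cm 2 => y 0) * fun y : Cm 2 => y 0) * Wf) y from rfl, h.fderiv]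
  simp only [ContinuousLinearMap.smul_apply, ContinuousLinearMap.add_apply,
    ContinuousLinearMap.proj_apply, Pi.single_eq_same, hd0, smul_eq_mul, Pi.mul_apply]
  ring

lemma pd1_quartic (c : ℂ) (x : Cm 2) :
    fderiv ℂ (fun y : Cm 2 => c * (y 1 * y 1 * y 1 * y 1)) x (Pi.single 1 1)
      = c * (4 * (x 1 * x 1 * x 1)) := by
  have hp : HasFDerivAt (fun y : Cm 2 => y 1)
      (ContinuousLinearMap.proj (R := ℂ) (φ := fun _ : Fin 2 => ℂ) 1) x :=
    hasFDerivAt_apply 1 x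
  have h := (((hp.mul hp).mul hp).mul hp).const_mul c
  rw [show (fun y : Cm 2 => c * (y 1 * y 1 * y 1 * y 1))
    = fun y => c * ((((fun y : Cm 2 => y 1) * fun y : Cm 2 => y 1) * fun y : Cm 2 => y 1)
      * fun y : Cm 2 => y 1) y
    from rfl, h.fderiv]
  simp only [ContinuousLinearMap.smul_apply, ContinuousLinearMap.add_apply,
    ContinuousLinearMap.proj_apply, Pi.single_eq_same, smul_eq_mul, Pi.mul_apply]
  ring

end Stmt8Aux

lemma extD_oneF (u v : O 2) (J : Fin 2 → Fin 2) :
    extD (oneF u v) J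
      = pd (J 0) (if J 1 = 0 then u else v) - pd (J 1) (if J 0 = 0 then u else v) := by
  show (∑ i : Fin 2, ((-1:ℂ) ^ (i:ℕ)) • pd (J i) (oneF u v (J ∘ i.succAbove))) = _
  rw [Fin.sum_univ_two]
  have ha : oneF u v (J ∘ (0:Fin 2).succAbove) = if J 1 = 0 then u else v := by
    simp [oneF, Function.comp, show (0:Fin 2).succAbove 0 = 1 from by decide]
  have hb : oneF u v (J ∘ (1:Fin 2).succAbove) = if J 0 = 0 then u else v := by
    simp [oneF, Function.comp, show (1:Fin 2).succAbove 0 = 0 from by decide]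
  rw [ha, hb]
  simp [sub_eq_add_neg]

set_option maxHeartbeats 10000000

open Stmt8Aux

/-- every closed 2-form germ on `(ℂ²,0)` has algebraic restriction
to `J = ⟨y², z⁴⟩` of the form `A[dy∧dz] + B[z dy∧dz] + C[z² dy∧dz]`. -/
theorem statement_8 (ω : Form 2 2) (hAlt : IsAlt ω) (hclosed : FormEq (extD ω) 0) :
    ∃ A B C : ℂ,
      ZeroAR (Ideal.span {Y ^ 2, Z ^ 4})
        (ω - twoF (A • 1 + B • Z + C • Z ^ 2)) := by
  classical
  set Jid : Fin 2 → Fin 2 := fun i => i with hJid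
  set Jsw : Fin 2 → Fin 2 := fun i => if i = 0 then 1 else 0 with hJsw
  set F : Cm 2 → ℂ := ((ω Jid : O 2) : Cm 2 → ℂ) with hF
  have hFa : AnalyticAt ℂ F 0 := (ω Jid).2
  obtain ⟨k1, hk1, e1⟩ := div_coord 1 F hFa
  obtain ⟨k2, hk2, e2⟩ := div_coord 1 k1 hk1
  obtain ⟨k3, hk3, e3⟩ := div_coord 1 k2 hk2
  obtain ⟨k4, hk4, e4⟩ := div_coord 1 k3 hk3
  obtain ⟨d0, hd0, f0⟩ := div_coord 0 (fun x => F (Lc 1 x)) (anaL 1 hFa)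
  obtain ⟨d1, hd1, f1⟩ := div_coord 0 (fun x => k1 (Lc 1 x)) (anaL 1 hk1)
  obtain ⟨d2, hd2, f2⟩ := div_coord 0 (fun x => k2 (Lc 1 x)) (anaL 1 hk2)
  obtain ⟨d3, hd3, f3⟩ := div_coord 0 (fun x => k3 (Lc 1 x)) (anaL 1 hk3)
  obtain ⟨g0, hg0, q0⟩ := div_coord 0 d0 hd0
  obtain ⟨g1, hg1, q1⟩ := div_coord 0 d1 hd1
  obtain ⟨g2, hg2, q2⟩ := div_coord 0 d2 hd2
  obtain ⟨g3, hg3, q3⟩ := div_coord 0 d3 hd3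
  have hc := coord_analyticAt 2 1 (0 : Cm 2)
  have hWa : AnalyticAt ℂ (fun x : Cm 2 => d0 (Lc 0 x) + x 1 * d1 (Lc 0 x)
      + x 1 * x 1 * d2 (Lc 0 x) + x 1 * x 1 * x 1 * d3 (Lc 0 x)) 0 :=
    (((anaL 0 hd0).add (hc.mul (anaL 0 hd1))).add
      ((hc.mul hc).mul (anaL 0 hd2))).add (((hc.mul hc).mul hc).mul (anaL 0 hd3))
  have hGa : AnalyticAt ℂ (fun x : Cm 2 => g0 x + x 1 * g1 x
      + x 1 * x 1 * g2 x + x 1 * x 1 * x 1 * g3 x) 0 :=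
    ((hg0.add (hc.mul hg1)).add ((hc.mul hc).mul hg2)).add (((hc.mul hc).mul hc).mul hg3)
  set Wsub : O 2 := ⟨_, hWa⟩ with hWsub
  set Gsub : O 2 := ⟨_, hGa⟩ with hGsub
  set k4sub : O 2 := ⟨k4, hk4⟩ with hk4sub
  have hWinv : ∀ x : Cm 2, (Wsub : Cm 2 → ℂ) (Lc 0 x) = (Wsub : Cm 2 → ℂ) x := by
    intro x
    have h1 : Lc 0 x 1 = x 1 := by rw [Lc_apply]; norm_num
    show d0 (Lc 0 (Lc 0 x)) + Lc 0 x 1 * d1 (Lc 0 (Lc 0 x))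
      + Lc 0 x 1 * Lc 0 x 1 * d2 (Lc 0 (Lc 0 x))
      + Lc 0 x 1 * Lc 0 x 1 * Lc 0 x 1 * d3 (Lc 0 (Lc 0 x)) = _
    rw [Lc_idem, h1]
  -- the ideal
  have hY2 : (Y^2 : O 2) ∈ Ideal.span ({Y ^ 2, Z ^ 4} : Set (O 2)) :=
    Ideal.subset_span (Set.mem_insert _ _)
  have hZ4 : (Z^4 : O 2) ∈ Ideal.span ({Y ^ 2, Z ^ 4} : Set (O 2)) :=
    Ideal.subset_span (Set.mem_insert_of_mem _ rfl)
  set Esub : O 2 := Y * Y * Gsub + Z * Z * Z * Z * k4sub with hEsub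
  have hEmem : Esub ∈ Ideal.span ({Y ^ 2, Z ^ 4} : Set (O 2)) := by
    have h1 : Y * Y * Gsub = Y ^ 2 * Gsub := by ring
    have h2 : Z * Z * Z * Z * k4sub = Z ^ 4 * k4sub := by ring
    rw [hEsub, h1, h2]
    exact Ideal.add_mem _ (Ideal.mul_mem_right _ _ hY2) (Ideal.mul_mem_right _ _ hZ4)
  set vsub : O 2 := (1/2 : ℂ) • (Y * Y * Wsub) with hvsub
  set usub : O 2 := (-(k3 0 / 4) : ℂ) • (Z * Z * Z * Z) with husub
  have hvmem : vsub ∈ Ideal.span ({Y ^ 2, Z ^ 4} : Set (O 2)) := by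
    have h : vsub = Y ^ 2 * ((1/2 : ℂ) • Wsub) := by
      rw [hvsub, mul_smul_comm]; congr 1; ring
    rw [h]; exact Ideal.mul_mem_right _ _ hY2
  have humem : usub ∈ Ideal.span ({Y ^ 2, Z ^ 4} : Set (O 2)) := by
    have h : usub = Z ^ 4 * ((-(k3 0 / 4) : ℂ) • 1) := by
      rw [husub, mul_smul_comm, mul_one]; congr 1; ring
    rw [h]; exact Ideal.mul_mem_right _ _ hZ4
  -- derivative facts
  have hpdv : ∀ᶠ x in 𝓝 (0 : Cm 2),
      fderiv ℂ ((vsub : O 2) : Cm 2 → ℂ) x (Pi.single 0 1)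
        = x 0 * (Wsub : Cm 2 → ℂ) x := pd0_sq_mul hWa hWinv
  have hpdu : ∀ x : Cm 2,
      fderiv ℂ ((usub : O 2) : Cm 2 → ℂ) x (Pi.single 1 1)
        = -(k3 0 / 4) * (4 * (x 1 * x 1 * x 1)) := by
    intro x
    exact pd1_quartic (-(k3 0 / 4)) x
  -- master decomposition
  have master : ∀ᶠ x in 𝓝 (0 : Cm 2), F x
      = F 0 + k1 0 * x 1 + k2 0 * (x 1 * x 1) + k3 0 * (x 1 * x 1 * x 1)
        + x 0 * (d0 (Lc 0 x) + x 1 * d1 (Lc 0 x) + x 1 * x 1 * d2 (Lc 0 x)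
            + x 1 * x 1 * x 1 * d3 (Lc 0 x))
        + x 0 * x 0 * (g0 x + x 1 * g1 x + x 1 * x 1 * g2 x + x 1 * x 1 * x 1 * g3 x)
        + (x 1 * x 1 * x 1 * x 1) * k4 x := by
    filter_upwards [e1, e2, e3, e4, f0, f1, f2, f3, q0, q1, q2, q3]
      with x h1 h2 h3 h4 hf0 hf1 hf2 hf3 hq0 hq1 hq2 hq3
    rw [Lc10 x] at hf0 hf1 hf2 hf3
    linear_combination h1 + x 1 * h2 + x 1 * x 1 * h3 + x 1 * x 1 * x 1 * h4
      + hf0 + x 1 * hf1 + x 1 * x 1 * hf2 + x 1 * x 1 * x 1 * hf3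
      + x 0 * hq0 + x 0 * x 1 * hq1 + x 0 * x 1 * x 1 * hq2 + x 0 * x 1 * x 1 * x 1 * hq3
  refine ⟨F 0, k1 0, k2 0, twoF Esub, oneF usub vsub, ?_, ?_, ?_⟩
  · intro J
    simp only [twoF]
    split_ifs with hh1 hh2
    · exact hEmem
    · exact neg_mem hEmem
    · exact zero_mem _
  · intro J
    simp only [oneF]
    split_ifs with hh1
    · exact humem
    · exact hvmem
  · intro J
    show ((ω J - twoF (F 0 • 1 + k1 0 • Z + k2 0 • Z ^ 2) J : O 2) : Cm 2 → ℂ)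
      =ᶠ[𝓝 (0 : Cm 2)]
      ((twoF Esub J + extD (oneF usub vsub) J : O 2) : Cm 2 → ℂ)
    rcases fin2 (J 0) with h0 | h0 <;> rcases fin2 (J 1) with h1 | h1
    · -- (0,0) : degenerate
      have hω0 : ω J = 0 := hAlt.1 J
        (fun hinj => absurd (hinj (show J 0 = J 1 by rw [h0, h1])) (by decide))
      have htwf : twoF (F 0 • 1 + k1 0 • Z + k2 0 • Z ^ 2) J = 0 := by
        simp [twoF, h0, h1]
      have htwE : twoF Esub J = 0 := by simp [twoF, h0, h1]
      have hed : extD (oneF usub vsub) J = 0 := by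
        rw [extD_oneF, h0, h1]; simp
      rw [hω0, htwf, htwE, hed]
      simp
    · -- (0,1) : J = Jid
      have hJ : J = Jid := by
        funext i; rcases fin2 i with h | h <;> subst h <;> simp [hJid, h0, h1]
      rw [hJ]
      have htwf : twoF (F 0 • 1 + k1 0 • Z + k2 0 • Z ^ 2) Jid
          = F 0 • 1 + k1 0 • Z + k2 0 • Z ^ 2 := by simp [twoF, hJid]
      have htwE : twoF Esub Jid = Esub := by simp [twoF, hJid]
      have hed : extD (oneF usub vsub) Jid = pd 0 vsub - pd 1 usub := by
        rw [extD_oneF, show Jid 0 = 0 from rfl, show Jid 1 = 1 from rfl,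
          if_neg (by decide), if_pos rfl]
      rw [htwf, htwE, hed]
      filter_upwards [master, hpdv] with x hx hv
      have hL : ((ω Jid - (F 0 • 1 + k1 0 • Z + k2 0 • Z ^ 2) : O 2) : Cm 2 → ℂ) x
          = F x - (F 0 + k1 0 * x 1 + k2 0 * (x 1 * x 1)) := by
        simp [hF, Z, coordO, pow_two]
        try ring
      have hR : ((Esub + (pd 0 vsub - pd 1 usub) : O 2) : Cm 2 → ℂ) x
          = (x 0 * x 0 * ((Gsub : Cm 2 → ℂ) x) + x 1 * x 1 * x 1 * x 1 * k4 x)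
            + (fderiv ℂ ((vsub : O 2) : Cm 2 → ℂ) x (Pi.single 0 1)
               - fderiv ℂ ((usub : O 2) : Cm 2 → ℂ) x (Pi.single 1 1)) := by
        show (Y : Cm 2 → ℂ) x * (Y : Cm 2 → ℂ) x * (Gsub : Cm 2 → ℂ) x
            + (Z : Cm 2 → ℂ) x * (Z : Cm 2 → ℂ) x * (Z : Cm 2 → ℂ) x * (Z : Cm 2 → ℂ) x
              * (k4sub : Cm 2 → ℂ) x + _ = _
        rfl
      rw [hL, hR, hv, hpdu x]
      have hWx : (Wsub : Cm 2 → ℂ) x = d0 (Lc 0 x) + x 1 * d1 (Lc 0 x)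
          + x 1 * x 1 * d2 (Lc 0 x) + x 1 * x 1 * x 1 * d3 (Lc 0 x) := rfl
      have hGx : (Gsub : Cm 2 → ℂ) x = g0 x + x 1 * g1 x + x 1 * x 1 * g2 x
          + x 1 * x 1 * x 1 * g3 x := rfl
      rw [hGx]
      linear_combination hx
    · -- (1,0) : J = Jsw
      have hJ : J = Jsw := by
        funext i; rcases fin2 i with h | h <;> subst h <;> simp [hJsw, h0, h1]
      rw [hJ]
      have hρ := hAlt.2 Jid (Equiv.swap 0 1)
      have hcomp : Jid ∘ (Equiv.swap (0:Fin 2) 1) = Jsw := by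
        funext i; rcases fin2 i with h | h <;> subst h <;>
          simp [hJid, hJsw, Equiv.swap_apply_left, Equiv.swap_apply_right]
      have hsign : Equiv.Perm.sign (Equiv.swap (0:Fin 2) 1) = -1 :=
        Equiv.Perm.sign_swap (by decide)
      rw [hcomp, hsign] at hρ
      have hωsw : ω Jsw = -(ω Jid) := by
        rw [hρ]; norm_num
      have htwf : twoF (F 0 • 1 + k1 0 • Z + k2 0 • Z ^ 2) Jsw
          = -(F 0 • 1 + k1 0 • Z + k2 0 • Z ^ 2) := by simp [twoF, hJsw]
      have htwE : twoF Esub Jsw = -Esub := by simp [twoF, hJsw]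
      have hed : extD (oneF usub vsub) Jsw = pd 1 usub - pd 0 vsub := by
        rw [extD_oneF, show Jsw 0 = 1 from rfl, show Jsw 1 = 0 from rfl,
          if_pos rfl, if_neg (by decide)]
      rw [hωsw, htwf, htwE, hed]
      filter_upwards [master, hpdv] with x hx hv
      have hL : ((-(ω Jid) - -(F 0 • 1 + k1 0 • Z + k2 0 • Z ^ 2) : O 2) : Cm 2 → ℂ) x
          = -(F x) + (F 0 + k1 0 * x 1 + k2 0 * (x 1 * x 1)) := by
        simp [hF, Z, coordO, pow_two]
        try ring
      have hR : ((-Esub + (pd 1 usub - pd 0 vsub) : O 2) : Cm 2 → ℂ) x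
          = -(x 0 * x 0 * ((Gsub : Cm 2 → ℂ) x) + x 1 * x 1 * x 1 * x 1 * k4 x)
            + (fderiv ℂ ((usub : O 2) : Cm 2 → ℂ) x (Pi.single 1 1)
               - fderiv ℂ ((vsub : O 2) : Cm 2 → ℂ) x (Pi.single 0 1)) := by
        show -((Y : Cm 2 → ℂ) x * (Y : Cm 2 → ℂ) x * (Gsub : Cm 2 → ℂ) x
            + (Z : Cm 2 → ℂ) x * (Z : Cm 2 → ℂ) x * (Z : Cm 2 → ℂ) x * (Z : Cm 2 → ℂ) x
              * (k4sub : Cm 2 → ℂ) x) + _ = _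
        rfl
      rw [hL, hR, hv, hpdu x]
      have hWx : (Wsub : Cm 2 → ℂ) x = d0 (Lc 0 x) + x 1 * d1 (Lc 0 x)
          + x 1 * x 1 * d2 (Lc 0 x) + x 1 * x 1 * x 1 * d3 (Lc 0 x) := rfl
      have hGx : (Gsub : Cm 2 → ℂ) x = g0 x + x 1 * g1 x + x 1 * x 1 * g2 x
          + x 1 * x 1 * x 1 * g3 x := rfl
      rw [hGx]
      linear_combination -hx
    · -- (1,1) : degenerate
      have hω0 : ω J = 0 := hAlt.1 J
        (fun hinj => absurd (hinj (show J 0 = J 1 by rw [h0, h1])) (by decide))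
      have htwf : twoF (F 0 • 1 + k1 0 • Z + k2 0 • Z ^ 2) J = 0 := by
        simp [twoF, h0, h1]
      have htwE : twoF Esub J = 0 := by simp [twoF, h0, h1]
      have hed : extD (oneF usub vsub) J = 0 := by
        rw [extD_oneF, h0, h1]; simp
      rw [hω0, htwf, htwE, hed]
      simp
end
end
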